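/- Consider AE jigsaw percolation on a sequence of connected puzzle graphs G_puz with N vertices and maximum degree at most D = D(N), where the people graph is Erdős–Rényi with edge probability p = μ/(D log N) for a constant μ > 0. Set η = limsup_{N→∞} (log D / log N). If μ < min{2e^{-(3+η)}, e^{-(5+η)/2}}, then P_p(Solve) → 0 as N → ∞. -/

import Mathlib

open scoped Classical
open Filter

noncomputable section

namespace JigsawPerc

variable {V : Type*}

/-- Number of `G`-neighbors of `v` inside `S` (not including `v`). -/
def nbrCount (G : SimpleGraph V) (v : V) (S : Set V) : ℕ :=
  {u ∈ S | G.Adj v u}.ncard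

/-- One-directional merging condition, (J1)–(J3), from part `Wi` toward part `Wj`. -/
def LinkedDir (Gpuz Gppl : SimpleGraph V) (σ τ : ℕ) (θ : ℕ∞) (Wi Wj : Set V) : Prop :=
  (∃ v₁ ∈ Wi, ∃ v₂ ∈ Wj, Gppl.Adj v₁ v₂ ∧ Gpuz.Adj v₁ v₂) ∨
  (∃ v₁ ∈ Wi, θ ≤ (nbrCount Gpuz v₁ Wj : ℕ∞)) ∨
  (∃ v₁ ∈ Wi, σ ≤ nbrCount Gppl v₁ Wj ∧ τ ≤ nbrCount Gpuz v₁ Wj)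

/-- Two distinct parts are linked when (J1), (J2) or (J3) holds in one of the two directions. -/
def Linked (Gpuz Gppl : SimpleGraph V) (σ τ : ℕ) (θ : ℕ∞) (Wi Wj : Set V) : Prop :=
  Wi ≠ Wj ∧ (LinkedDir Gpuz Gppl σ τ θ Wi Wj ∨ LinkedDir Gpuz Gppl σ τ θ Wj Wi)

/-- One step of the jigsaw dynamics: merge all parts lying in the same connected
component of the `Linked` graph on parts. -/
def step (Gpuz Gppl : SimpleGraph V) (σ τ : ℕ) (θ : ℕ∞) (P : Set (Set V)) : Set (Set V) :=
  { U | ∃ W ∈ P, U = ⋃₀ {W' | W' ∈ P ∧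
      Relation.EqvGen (fun A B => A ∈ P ∧ B ∈ P ∧ Linked Gpuz Gppl σ τ θ A B) W W'} }

/-- The partition at time `t`, started from the partition into singletons. -/
def partAt (Gpuz Gppl : SimpleGraph V) (σ τ : ℕ) (θ : ℕ∞) (t : ℕ) : Set (Set V) :=
  (step Gpuz Gppl σ τ θ)^[t] {S : Set V | ∃ v, S = {v}}

/-- The event that the puzzle is solved: at some time all vertices form one single part. -/
def Solve (Gpuz Gppl : SimpleGraph V) (σ τ : ℕ) (θ : ℕ∞) : Prop :=
  ∃ t, partAt Gpuz Gppl σ τ θ t = {Set.univ}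

/-- `A` is internally solved: jigsaw percolation on the induced subgraphs solves `A`. -/
def SolveIn (Gpuz Gppl : SimpleGraph V) (σ τ : ℕ) (θ : ℕ∞) (A : Set V) : Prop :=
  Solve (Gpuz.induce A) (Gppl.induce A) σ τ θ

/-- The people graph determined by a configuration of the off-diagonal edge indicators. -/
def graphOf (ω : {e : Sym2 V // ¬ e.IsDiag} → Bool) : SimpleGraph V :=
  SimpleGraph.fromEdgeSet {e | ∃ h : ¬ e.IsDiag, ω ⟨e, h⟩ = true}

/-- Probability, under the Erdős–Rényi measure with edge probability `p` on the vertex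
set `V`, of the people-graph event `A`. -/
def erProb [Fintype V] (p : ℝ) (A : SimpleGraph V → Prop) : ℝ :=
  ∑ ω : {e : Sym2 V // ¬ e.IsDiag} → Bool,
    if A (graphOf ω) then ∏ e, (if ω e then p else 1 - p) else 0

/-- Probability that jigsaw percolation with puzzle graph `Gpuz`, Erdős–Rényi people graph
with edge probability `p`, and thresholds `σ, τ, θ` solves the puzzle. -/
def solveProb [Fintype V] (Gpuz : SimpleGraph V) (σ τ : ℕ) (θ : ℕ∞) (p : ℝ) : ℝ :=
  erProb p fun Gppl => Solve Gpuz Gppl σ τ θ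

/-- The `d`-dimensional discrete torus on `ℤ_n^d`: nearest-neighbor adjacency with
periodic boundary conditions. -/
def torus (d n : ℕ) : SimpleGraph (Fin d → Fin n) :=
  SimpleGraph.fromRel fun x y =>
    ∃ i, (∀ j, j ≠ i → x j = y j) ∧ ((x i : ℕ) + 1) % n = (y i : ℕ)

/-- The ring (cycle) graph on `ℤ_n`. -/
def ring (n : ℕ) : SimpleGraph (Fin n) :=
  SimpleGraph.fromRel fun x y => ((x : ℕ) + 1) % n = (y : ℕ)

/-- `P(Poisson(x) ≥ σ) = e^{-x} ∑_{i=σ}^∞ x^i/i!`. -/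
def poissonTail (σ : ℕ) (x : ℝ) : ℝ :=
  Real.exp (-x) * ∑' i : ℕ, x ^ (σ + i) / (σ + i).factorial

/-- `g_σ(x) = -log P(Poisson(x) ≥ σ)`. -/
def gPois (σ : ℕ) (x : ℝ) : ℝ := -Real.log (poissonTail σ x)

/-- `λ_σ = ∫_0^∞ g_σ(x) dx`. -/
def lambdaC (σ : ℕ) : ℝ := ∫ x in Set.Ioi (0 : ℝ), gPois σ x

/-- `ν_σ = ∫_0^∞ -log(1 - exp(-x^{2σ+1}/σ!)) dx`. -/
def nuC (σ : ℕ) : ℝ :=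
  ∫ x in Set.Ioi (0 : ℝ), -Real.log (1 - Real.exp (-(x ^ (2 * σ + 1) / (σ.factorial : ℝ))))

section Det

variable {V : Type*} [Fintype V] [DecidableEq V]

/-- Reachability through a finite set of (undirected) edges. -/
def Reach (T : Finset (Sym2 V)) : V → V → Prop :=
  Relation.ReflTransGen (fun x y => s(x, y) ∈ T)

lemma Reach.mono {T T' : Finset (Sym2 V)} (h : T ⊆ T') {x y : V} (hr : Reach T x y) :
    Reach T' x y :=
  Relation.ReflTransGen.mono (fun _ _ hab => h hab) _ _ hr

/-- `T` connects up all of `F`. -/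
def Spans (F : Finset V) (T : Finset (Sym2 V)) : Prop :=
  ∀ x ∈ F, ∀ y ∈ F, Reach T x y

/-- `A` carries a spanning set of puzzle edges and `|A| - 1` people edges. -/
def good (Gpuz Gppl : SimpleGraph V) (A : Set V) : Prop :=
  ∃ (F : Finset V) (T U : Finset (Sym2 V)),
    (F : Set V) = A ∧
    (∀ e ∈ T, e ∈ Gpuz.edgeSet ∧ ∀ x ∈ e, x ∈ F) ∧ Spans F T ∧ T.card + 1 = F.card ∧
    (∀ e ∈ U, e ∈ Gppl.edgeSet ∧ ∀ x ∈ e, x ∈ F) ∧ U.card + 1 = F.card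

lemma good_singleton (Gpuz Gppl : SimpleGraph V) (v : V) : good Gpuz Gppl {v} := by
  refine ⟨{v}, ∅, ∅, by simp, by simp, ?_, by simp, by simp, by simp⟩
  intro x hx y hy
  simp only [Finset.mem_singleton] at hx hy
  subst hx; subst hy; exact Relation.ReflTransGen.refl

lemma good_union {Gpuz Gppl : SimpleGraph V} {A B : Set V}
    (hA : good Gpuz Gppl A) (hB : good Gpuz Gppl B) (hd : Disjoint A B)
    {a b : V} (ha : a ∈ A) (hb : b ∈ B) (hab : Gpuz.Adj a b)
    {a' b' : V} (ha' : a' ∈ A) (hb' : b' ∈ B) (hab' : Gppl.Adj a' b') :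
    good Gpuz Gppl (A ∪ B) := by
  obtain ⟨FA, TA, UA, hFA, hTA, hSA, hcTA, hUA, hcUA⟩ := hA
  obtain ⟨FB, TB, UB, hFB, hTB, hSB, hcTB, hUB, hcUB⟩ := hB
  have hdF : Disjoint FA FB := by
    rw [← Finset.disjoint_coe, hFA, hFB]; exact hd
  have hmemA : ∀ x : V, x ∈ FA ↔ x ∈ A := by intro x; rw [← hFA]; rfl
  have hmemB : ∀ x : V, x ∈ FB ↔ x ∈ B := by intro x; rw [← hFB]; rfl
  have haFA : a ∈ FA := (hmemA a).2 ha
  have hbFB : b ∈ FB := (hmemB b).2 hb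
  have ha'FA : a' ∈ FA := (hmemA a').2 ha'
  have hb'FB : b' ∈ FB := (hmemB b').2 hb'
  -- edges within FA never touch FB and vice versa
  have hTAnotB : ∀ e ∈ TA, e ∉ TB := by
    intro e heA heB
    induction e with
    | _ x y =>
      have hx1 : x ∈ FA := (hTA _ heA).2 x (Sym2.mem_mk_left x y)
      have hx2 : x ∈ FB := (hTB _ heB).2 x (Sym2.mem_mk_left x y)
      exact (Finset.disjoint_left.1 hdF) hx1 hx2
  have hUAnotB : ∀ e ∈ UA, e ∉ UB := by
    intro e heA heB
    induction e with
    | _ x y =>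
      have hx1 : x ∈ FA := (hUA _ heA).2 x (Sym2.mem_mk_left x y)
      have hx2 : x ∈ FB := (hUB _ heB).2 x (Sym2.mem_mk_left x y)
      exact (Finset.disjoint_left.1 hdF) hx1 hx2
  have habT : s(a, b) ∉ TA ∪ TB := by
    intro hmem
    rcases Finset.mem_union.1 hmem with h | h
    · have : b ∈ FA := (hTA _ h).2 b (Sym2.mem_mk_right a b)
      exact (Finset.disjoint_left.1 hdF) this hbFB
    · have : a ∈ FB := (hTB _ h).2 a (Sym2.mem_mk_left a b)
      exact (Finset.disjoint_left.1 hdF) haFA this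
  have hab'U : s(a', b') ∉ UA ∪ UB := by
    intro hmem
    rcases Finset.mem_union.1 hmem with h | h
    · have : b' ∈ FA := (hUA _ h).2 b' (Sym2.mem_mk_right a' b')
      exact (Finset.disjoint_left.1 hdF) this hb'FB
    · have : a' ∈ FB := (hUB _ h).2 a' (Sym2.mem_mk_left a' b')
      exact (Finset.disjoint_left.1 hdF) ha'FA this
  refine ⟨FA ∪ FB, insert s(a, b) (TA ∪ TB), insert s(a', b') (UA ∪ UB), ?_, ?_, ?_, ?_, ?_, ?_⟩
  · rw [Finset.coe_union, hFA, hFB]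
  · intro e he
    rcases Finset.mem_insert.1 he with rfl | he'
    · refine ⟨Gpuz.mem_edgeSet.2 hab, ?_⟩
      intro x hx
      rcases Sym2.mem_iff.1 hx with rfl | rfl
      · exact Finset.mem_union_left _ haFA
      · exact Finset.mem_union_right _ hbFB
    · rcases Finset.mem_union.1 he' with h | h
      · exact ⟨(hTA _ h).1, fun x hx => Finset.mem_union_left _ ((hTA _ h).2 x hx)⟩
      · exact ⟨(hTB _ h).1, fun x hx => Finset.mem_union_right _ ((hTB _ h).2 x hx)⟩
  · -- Spans
    set T' := insert s(a, b) (TA ∪ TB) with hT'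
    have hsubA : TA ⊆ T' := fun e he => Finset.mem_insert_of_mem (Finset.mem_union_left _ he)
    have hsubB : TB ⊆ T' := fun e he => Finset.mem_insert_of_mem (Finset.mem_union_right _ he)
    have crossab : Reach T' a b :=
      Relation.ReflTransGen.single (Finset.mem_insert_self _ _)
    have crossba : Reach T' b a := by
      refine Relation.ReflTransGen.single ?_
      rw [Sym2.eq_swap]; exact Finset.mem_insert_self _ _
    intro x hx y hy
    rcases Finset.mem_union.1 hx with hxA | hxB <;> rcases Finset.mem_union.1 hy with hyA | hyB
    · exact Reach.mono hsubA (hSA x hxA y hyA)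
    · exact ((Reach.mono hsubA (hSA x hxA a haFA)).trans crossab).trans
        (Reach.mono hsubB (hSB b hbFB y hyB))
    · exact ((Reach.mono hsubB (hSB x hxB b hbFB)).trans crossba).trans
        (Reach.mono hsubA (hSA a haFA y hyA))
    · exact Reach.mono hsubB (hSB x hxB y hyB)
  · rw [Finset.card_insert_of_notMem habT,
      Finset.card_union_of_disjoint (Finset.disjoint_left.2 hTAnotB),
      Finset.card_union_of_disjoint hdF]
    omega
  · intro e he
    rcases Finset.mem_insert.1 he with rfl | he'
    · refine ⟨Gppl.mem_edgeSet.2 hab', ?_⟩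
      intro x hx
      rcases Sym2.mem_iff.1 hx with rfl | rfl
      · exact Finset.mem_union_left _ ha'FA
      · exact Finset.mem_union_right _ hb'FB
    · rcases Finset.mem_union.1 he' with h | h
      · exact ⟨(hUA _ h).1, fun x hx => Finset.mem_union_left _ ((hUA _ h).2 x hx)⟩
      · exact ⟨(hUB _ h).1, fun x hx => Finset.mem_union_right _ ((hUB _ h).2 x hx)⟩
  · rw [Finset.card_insert_of_notMem hab'U,
      Finset.card_union_of_disjoint (Finset.disjoint_left.2 hUAnotB),
      Finset.card_union_of_disjoint hdF]
    omega

end Det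
section Det2

set_option linter.unusedSectionVars false

variable {V : Type*} [Fintype V] [DecidableEq V]

lemma linkedDir_cross {Gpuz Gppl : SimpleGraph V} {A B : Set V}
    (h : LinkedDir Gpuz Gppl 1 1 ⊤ A B) :
    (∃ a ∈ A, ∃ b ∈ B, Gpuz.Adj a b) ∧ (∃ a ∈ A, ∃ b ∈ B, Gppl.Adj a b) := by
  rcases h with ⟨v₁, hv₁, v₂, hv₂, hppl, hpuz⟩ | ⟨v₁, hv₁, htop⟩ | ⟨v₁, hv₁, hppl, hpuz⟩
  · exact ⟨⟨v₁, hv₁, v₂, hv₂, hpuz⟩, ⟨v₁, hv₁, v₂, hv₂, hppl⟩⟩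
  · exact absurd (top_le_iff.1 htop) (by simp)
  · have h1 : ({u ∈ B | Gppl.Adj v₁ u}).Nonempty :=
      Set.nonempty_of_ncard_ne_zero (by unfold nbrCount at hppl; omega)
    have h2 : ({u ∈ B | Gpuz.Adj v₁ u}).Nonempty :=
      Set.nonempty_of_ncard_ne_zero (by unfold nbrCount at hpuz; omega)
    obtain ⟨u, hu, hadj⟩ := h1
    obtain ⟨u', hu', hadj'⟩ := h2
    exact ⟨⟨v₁, hv₁, u', hu', hadj'⟩, ⟨v₁, hv₁, u, hu, hadj⟩⟩

lemma linked_cross {Gpuz Gppl : SimpleGraph V} {A B : Set V}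
    (h : Linked Gpuz Gppl 1 1 ⊤ A B) :
    (∃ a ∈ A, ∃ b ∈ B, Gpuz.Adj a b) ∧ (∃ a ∈ A, ∃ b ∈ B, Gppl.Adj a b) := by
  rcases h.2 with hd | hd
  · exact linkedDir_cross hd
  · obtain ⟨⟨a, ha, b, hb, hab⟩, ⟨a', ha', b', hb', hab'⟩⟩ := linkedDir_cross hd
    exact ⟨⟨b, hb, a, ha, hab.symm⟩, ⟨b', hb', a', ha', hab'.symm⟩⟩

lemma eqvGen_to_rtg {α : Type*} {r : α → α → Prop} (hsym : Symmetric r) {a b : α}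
    (h : Relation.EqvGen r a b) : Relation.ReflTransGen r a b := by
  induction h with
  | rel x y hxy => exact Relation.ReflTransGen.single hxy
  | refl x => exact Relation.ReflTransGen.refl
  | symm x y _ ih => haveI : Std.Symm r := ⟨fun _ _ h => hsym h⟩; exact (Relation.ReflTransGen.symmetric (r := r)).symm _ _ ih
  | trans x y z _ _ ih₁ ih₂ => exact ih₁.trans ih₂

lemma crossing {α : Type*} {r : α → α → Prop} (hsym : Symmetric r) {a b : α}
    (h : Relation.EqvGen r a b) (S : Set α) (ha : a ∈ S) :
    b ∉ S → ∃ x ∈ S, ∃ y, y ∉ S ∧ r x y := by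
  have h' := eqvGen_to_rtg hsym h
  clear h
  induction h' with
  | refl => exact fun hb => absurd ha hb
  | @tail b' c hab hbc ih =>
    intro hc
    by_cases hb' : b' ∈ S
    · exact ⟨b', hb', c, hc, hbc⟩
    · exact ih hb'

/-- partition-with-good-parts invariant -/
def IsGoodPartition (Gpuz Gppl : SimpleGraph V) (P : Set (Set V)) : Prop :=
  (∀ A ∈ P, good Gpuz Gppl A) ∧ ∀ A ∈ P, ∀ B ∈ P, A ≠ B → Disjoint A B

variable {Gpuz Gppl : SimpleGraph V}

/-- linking relation on parts -/
abbrev lrel (Gpuz Gppl : SimpleGraph V) (P : Set (Set V)) : Set V → Set V → Prop :=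
  fun A B => A ∈ P ∧ B ∈ P ∧ Linked Gpuz Gppl 1 1 ⊤ A B

/-- link-class of `W` in `P` -/
def cls (Gpuz Gppl : SimpleGraph V) (P : Set (Set V)) (W : Set V) : Set (Set V) :=
  {W' | W' ∈ P ∧ Relation.EqvGen (lrel Gpuz Gppl P) W W'}

lemma step_eq (P : Set (Set V)) :
    step Gpuz Gppl 1 1 ⊤ P = {U | ∃ W ∈ P, U = ⋃₀ cls Gpuz Gppl P W} := rfl

lemma lrel_symm (P : Set (Set V)) : Symmetric (lrel Gpuz Gppl P) := by
  intro A B ⟨hA, hB, hne, hdir⟩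
  exact ⟨hB, hA, Ne.symm hne, hdir.symm⟩

lemma sUnion_good (hP : IsGoodPartition Gpuz Gppl P) {W : Set V} (hW : W ∈ P) :
    good Gpuz Gppl (⋃₀ cls Gpuz Gppl P W) := by
  set C := cls Gpuz Gppl P W with hC
  suffices H : ∀ (k : ℕ) (F : Finset (Set V)), ↑F ⊆ C → W ∈ F →
      good Gpuz Gppl (⋃₀ ↑F) → (C \ ↑F).ncard = k → good Gpuz Gppl (⋃₀ C) by
    refine H (C \ ↑({W} : Finset (Set V))).ncard {W} ?_ (Finset.mem_singleton_self W) ?_ rfl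
    · intro X hX
      simp only [Finset.coe_singleton, Set.mem_singleton_iff] at hX
      rw [hX]; exact ⟨hW, Relation.EqvGen.refl W⟩
    · simpa using hP.1 W hW
  intro k
  induction k with
  | zero =>
    intro F hFC hWF hgood hcard
    have hfin : (C \ ↑F).Finite := Set.toFinite _
    have : C \ ↑F = ∅ := (Set.ncard_eq_zero hfin).1 hcard
    have hCF : C = ↑F := Set.Subset.antisymm (Set.diff_eq_empty.1 this) hFC
    rwa [hCF]
  | succ n ih =>
    intro F hFC hWF hgood hcard
    have hne : (C \ ↑F).Nonempty := Set.nonempty_of_ncard_ne_zero (by omega)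
    obtain ⟨B, hBC, hBF⟩ := hne
    obtain ⟨X, hXF, Y, hYF, hr⟩ :=
      crossing (lrel_symm P) hBC.2 (↑F : Set (Set V)) (by exact hWF) (by exact hBF)
    have hYP : Y ∈ P := hr.2.1
    have hYC : Y ∈ C := ⟨hYP, Relation.EqvGen.trans _ _ _ (hFC hXF).2
      (Relation.EqvGen.rel _ _ hr)⟩
    have hdisj : Disjoint (⋃₀ (↑F : Set (Set V))) Y := by
      refine Set.disjoint_sUnion_left.2 ?_
      intro A hAF
      refine hP.2 A (hFC hAF).1 Y hYP ?_
      rintro rfl; exact hYF hAF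
    obtain ⟨⟨aa, haa, bb, hbb, hadj⟩, ⟨aa', haa', bb', hbb', hadj'⟩⟩ := linked_cross hr.2.2
    have hgood' : good Gpuz Gppl (⋃₀ ↑(insert Y F)) := by
      have h1 : good Gpuz Gppl (⋃₀ (↑F : Set (Set V)) ∪ Y) := by
        refine good_union hgood (hP.1 Y hYP) hdisj ?_ hbb hadj ?_ hbb' hadj'
        · exact Set.mem_sUnion.2 ⟨X, hXF, haa⟩
        · exact Set.mem_sUnion.2 ⟨X, hXF, haa'⟩
      have : ⋃₀ ↑(insert Y F) = ⋃₀ (↑F : Set (Set V)) ∪ Y := by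
        rw [Finset.coe_insert, Set.sUnion_insert, Set.union_comm]
      rwa [this]
    refine ih (insert Y F) ?_ (Finset.mem_insert_of_mem hWF) hgood' ?_
    · intro Z hZ
      rcases Finset.mem_coe.1 hZ |> Finset.mem_insert.1 with rfl | hZF
      · exact hYC
      · exact hFC hZF
    · have : (C \ ↑(insert Y F)) = (C \ ↑F) \ {Y} := by
        rw [Finset.coe_insert]
        ext Z
        simp only [Set.mem_diff, Set.mem_insert_iff, Set.mem_singleton_iff, Finset.mem_coe]
        tauto
      have hYmem : B ∈ C \ (↑F : Set (Set V)) → True := fun _ => trivial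
      have hY' : Y ∈ C \ (↑F : Set (Set V)) := ⟨hYC, hYF⟩
      rw [this, Set.ncard_diff_singleton_of_mem hY']
      omega

end Det2
section Det3

set_option linter.unusedSectionVars false

variable {V : Type*} [Fintype V] [DecidableEq V] {Gpuz Gppl : SimpleGraph V} {P : Set (Set V)}

lemma sUnion_witness (hP : IsGoodPartition Gpuz Gppl P) {W : Set V} (hW : W ∈ P)
    {m : ℕ} (hparts : ∀ A ∈ P, A.ncard < m)
    (hbig : m ≤ (⋃₀ cls Gpuz Gppl P W).ncard) :
    ∃ S : Set V, good Gpuz Gppl S ∧ m ≤ S.ncard ∧ S.ncard < 2 * m := by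
  set C := cls Gpuz Gppl P W with hC
  suffices H : ∀ (k : ℕ) (F : Finset (Set V)), ↑F ⊆ C → W ∈ F →
      good Gpuz Gppl (⋃₀ ↑F) → (⋃₀ (↑F : Set (Set V))).ncard < m → (C \ ↑F).ncard = k →
      ∃ S : Set V, good Gpuz Gppl S ∧ m ≤ S.ncard ∧ S.ncard < 2 * m by
    refine H (C \ ↑({W} : Finset (Set V))).ncard {W} ?_ (Finset.mem_singleton_self W) ?_ ?_ rfl
    · intro X hX
      simp only [Finset.coe_singleton, Set.mem_singleton_iff] at hX
      rw [hX]; exact ⟨hW, Relation.EqvGen.refl W⟩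
    · simpa using hP.1 W hW
    · simpa using hparts W hW
  intro k
  induction k with
  | zero =>
    intro F hFC hWF hgood hsmall hcard
    have hfin : (C \ ↑F).Finite := Set.toFinite _
    have : C \ ↑F = ∅ := (Set.ncard_eq_zero hfin).1 hcard
    have hCF : C = ↑F := Set.Subset.antisymm (Set.diff_eq_empty.1 this) hFC
    rw [hCF] at hbig; omega
  | succ n ih =>
    intro F hFC hWF hgood hsmall hcard
    have hne : (C \ ↑F).Nonempty := Set.nonempty_of_ncard_ne_zero (by omega)
    obtain ⟨B, hBC, hBF⟩ := hne
    obtain ⟨X, hXF, Y, hYF, hr⟩ :=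
      crossing (lrel_symm P) hBC.2 (↑F : Set (Set V)) (by exact hWF) (by exact hBF)
    have hYP : Y ∈ P := hr.2.1
    have hYC : Y ∈ C := ⟨hYP, Relation.EqvGen.trans _ _ _ (hFC hXF).2
      (Relation.EqvGen.rel _ _ hr)⟩
    have hdisj : Disjoint (⋃₀ (↑F : Set (Set V))) Y := by
      refine Set.disjoint_sUnion_left.2 ?_
      intro A hAF
      refine hP.2 A (hFC hAF).1 Y hYP ?_
      rintro rfl; exact hYF hAF
    obtain ⟨⟨aa, haa, bb, hbb, hadj⟩, ⟨aa', haa', bb', hbb', hadj'⟩⟩ := linked_cross hr.2.2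
    have hUeq : ⋃₀ ↑(insert Y F) = ⋃₀ (↑F : Set (Set V)) ∪ Y := by
      rw [Finset.coe_insert, Set.sUnion_insert, Set.union_comm]
    have hgood' : good Gpuz Gppl (⋃₀ ↑(insert Y F)) := by
      rw [hUeq]
      refine good_union hgood (hP.1 Y hYP) hdisj ?_ hbb hadj ?_ hbb' hadj'
      · exact Set.mem_sUnion.2 ⟨X, hXF, haa⟩
      · exact Set.mem_sUnion.2 ⟨X, hXF, haa'⟩
    have hcard' : (⋃₀ ↑(insert Y F) : Set V).ncard < (⋃₀ (↑F : Set (Set V))).ncard + m := by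
      rw [hUeq]
      calc (⋃₀ (↑F : Set (Set V)) ∪ Y).ncard ≤ _ + _ := Set.ncard_union_le _ _
        _ < _ := by have := hparts Y hYP; omega
    by_cases hge : m ≤ (⋃₀ ↑(insert Y F) : Set V).ncard
    · exact ⟨_, hgood', hge, by omega⟩
    · refine ih (insert Y F) ?_ (Finset.mem_insert_of_mem hWF) hgood' (by omega) ?_
      · intro Z hZ
        rcases Finset.mem_coe.1 hZ |> Finset.mem_insert.1 with rfl | hZF
        · exact hYC
        · exact hFC hZF
      · have heq : (C \ ↑(insert Y F)) = (C \ ↑F) \ {Y} := by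
          rw [Finset.coe_insert]
          ext Z
          simp only [Set.mem_diff, Set.mem_insert_iff, Set.mem_singleton_iff, Finset.mem_coe]
          tauto
        have hY' : Y ∈ C \ (↑F : Set (Set V)) := ⟨hYC, hYF⟩
        rw [heq, Set.ncard_diff_singleton_of_mem hY']
        omega

lemma isGoodPartition_step (hP : IsGoodPartition Gpuz Gppl P) :
    IsGoodPartition Gpuz Gppl (step Gpuz Gppl 1 1 ⊤ P) := by
  constructor
  · rintro A ⟨W, hW, rfl⟩
    exact sUnion_good hP hW
  · rintro A ⟨W1, hW1, rfl⟩ B ⟨W2, hW2, rfl⟩ hne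
    by_contra hnd
    obtain ⟨x, hx1, hx2⟩ := Set.not_disjoint_iff.1 hnd
    obtain ⟨A1, hA1, hxA1⟩ := Set.mem_sUnion.1 hx1
    obtain ⟨A2, hA2, hxA2⟩ := Set.mem_sUnion.1 hx2
    have hA12 : A1 = A2 := by
      by_contra hne'
      exact Set.disjoint_left.1 (hP.2 A1 hA1.1 A2 hA2.1 hne') hxA1 hxA2
    subst hA12
    -- the two classes coincide
    have : cls Gpuz Gppl P W1 = cls Gpuz Gppl P W2 := by
      have h1 := hA1.2
      have h2 := hA2.2
      ext Z
      constructor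
      · rintro ⟨hZP, hZ⟩
        exact ⟨hZP, Relation.EqvGen.trans _ _ _
          (Relation.EqvGen.trans _ _ _ h2 (Relation.EqvGen.symm _ _ h1)) hZ⟩
      · rintro ⟨hZP, hZ⟩
        exact ⟨hZP, Relation.EqvGen.trans _ _ _
          (Relation.EqvGen.trans _ _ _ h1 (Relation.EqvGen.symm _ _ h2)) hZ⟩
    exact hne (congrArg Set.sUnion this)

lemma isGoodPartition_partAt (Gpuz Gppl : SimpleGraph V) (t : ℕ) :
    IsGoodPartition Gpuz Gppl (partAt Gpuz Gppl 1 1 ⊤ t) := by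
  induction t with
  | zero =>
    constructor
    · rintro A ⟨v, rfl⟩; exact good_singleton _ _ v
    · rintro A ⟨v, rfl⟩ B ⟨w, rfl⟩ hne
      simp only [Set.disjoint_singleton_left, Set.mem_singleton_iff]
      intro h; exact hne (by rw [h])
  | succ n ih =>
    have : partAt Gpuz Gppl 1 1 ⊤ (n + 1) = step Gpuz Gppl 1 1 ⊤ (partAt Gpuz Gppl 1 1 ⊤ n) :=
      Function.iterate_succ_apply' _ _ _
    rw [this]
    exact isGoodPartition_step ih

lemma exists_witness_set (Gpuz Gppl : SimpleGraph V)
    (hsolve : Solve Gpuz Gppl 1 1 ⊤) {m : ℕ} (hm : 2 ≤ m) (hmN : m ≤ Fintype.card V) :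
    ∃ S : Set V, good Gpuz Gppl S ∧ m ≤ S.ncard ∧ S.ncard < 2 * m := by
  obtain ⟨ts, hts⟩ := hsolve
  have hQs : ∃ t, ∃ A ∈ partAt Gpuz Gppl 1 1 ⊤ t, m ≤ A.ncard := by
    refine ⟨ts, Set.univ, ?_, ?_⟩
    · rw [hts]; exact rfl
    · rwa [Set.ncard_univ, Nat.card_eq_fintype_card]
  classical
  let t₀ := Nat.find hQs
  obtain ⟨A, hA, hAm⟩ : ∃ A ∈ partAt Gpuz Gppl 1 1 ⊤ t₀, m ≤ A.ncard := Nat.find_spec hQs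
  have ht₀pos : t₀ ≠ 0 := by
    intro h0
    rw [h0] at hA
    obtain ⟨v, rfl⟩ := hA
    rw [Set.ncard_singleton] at hAm
    omega
  obtain ⟨t₁, ht₁⟩ := Nat.exists_eq_succ_of_ne_zero ht₀pos
  have hsmall : ∀ B ∈ partAt Gpuz Gppl 1 1 ⊤ t₁, B.ncard < m := by
    intro B hB
    by_contra hge
    exact Nat.find_min hQs (by omega : t₁ < t₀) ⟨B, hB, by omega⟩
  have hstep : partAt Gpuz Gppl 1 1 ⊤ t₀ =
      step Gpuz Gppl 1 1 ⊤ (partAt Gpuz Gppl 1 1 ⊤ t₁) := by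
    rw [ht₁]; exact Function.iterate_succ_apply' _ _ _
  rw [hstep] at hA
  obtain ⟨W, hW, rfl⟩ := hA
  exact sUnion_witness (isGoodPartition_partAt Gpuz Gppl t₁) hW hsmall hAm

end Det3
section Prob

set_option linter.unusedSectionVars false
set_option maxHeartbeats 1000000

variable {V : Type*} [Fintype V]

/-- weight of a configuration -/
def wgt (p : ℝ) (ω : {e : Sym2 V // ¬ e.IsDiag} → Bool) : ℝ :=
  ∏ e, (if ω e then p else 1 - p)

lemma erProb_eq (p : ℝ) (A : SimpleGraph V → Prop) :
    erProb p A = ∑ ω : {e : Sym2 V // ¬ e.IsDiag} → Bool,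
      (if A (graphOf ω) then wgt p ω else 0) := by
  unfold erProb wgt; rfl

lemma wgt_nonneg {p : ℝ} (h0 : 0 ≤ p) (h1 : p ≤ 1) (ω : {e : Sym2 V // ¬ e.IsDiag} → Bool) :
    0 ≤ wgt p ω := by
  unfold wgt
  refine Finset.prod_nonneg fun e _ => ?_
  split <;> linarith

lemma ite_wgt_nonneg {p : ℝ} (h0 : 0 ≤ p) (h1 : p ≤ 1) (ω : {e : Sym2 V // ¬ e.IsDiag} → Bool)
    (Q : Prop) : 0 ≤ (if Q then wgt p ω else 0) := by
  split
  · exact wgt_nonneg h0 h1 ω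
  · exact le_refl 0

/-- cylinder event: all of `T₁` open and all of `T₀` closed. -/
def cylEvent (T₁ T₀ : Finset (Sym2 V)) (ω : {e : Sym2 V // ¬ e.IsDiag} → Bool) : Prop :=
  ∀ (e : Sym2 V) (he : ¬ e.IsDiag), (e ∈ T₁ → ω ⟨e, he⟩ = true) ∧ (e ∈ T₀ → ω ⟨e, he⟩ = false)

lemma card_coordFilter (T : Finset (Sym2 V)) (h : ∀ e ∈ T, ¬ e.IsDiag) :
    (Finset.univ.filter (fun c : {e : Sym2 V // ¬ e.IsDiag} => c.1 ∈ T)).card = T.card := by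
  refine Finset.card_bij (fun c _ => c.1) ?_ ?_ ?_
  · intro c hc; exact (Finset.mem_filter.1 hc).2
  · intro c hc c' hc' hcc; exact Subtype.ext hcc
  · intro e he; exact ⟨⟨e, h e he⟩, Finset.mem_filter.2 ⟨Finset.mem_univ _, he⟩, rfl⟩

lemma sum_cylinder (p : ℝ) (T₁ T₀ : Finset (Sym2 V)) (h₁ : ∀ e ∈ T₁, ¬ e.IsDiag)
    (h₀ : ∀ e ∈ T₀, ¬ e.IsDiag) (hd : Disjoint T₁ T₀) :
    ∑ ω : {e : Sym2 V // ¬ e.IsDiag} → Bool, (if cylEvent T₁ T₀ ω then wgt p ω else 0)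
      = p ^ T₁.card * (1 - p) ^ T₀.card := by
  classical
  set f : {e : Sym2 V // ¬ e.IsDiag} → Bool → ℝ := fun c b =>
    if c.1 ∈ T₁ then (if b then p else 0)
    else if c.1 ∈ T₀ then (if b then 0 else 1 - p)
    else (if b then p else 1 - p) with hf
  have key : ∀ ω : {e : Sym2 V // ¬ e.IsDiag} → Bool,
      (if cylEvent T₁ T₀ ω then wgt p ω else 0) = ∏ c, f c (ω c) := by
    intro ω
    by_cases hc : cylEvent T₁ T₀ ω
    · rw [if_pos hc]
      unfold wgt
      refine Finset.prod_congr rfl ?_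
      rintro ⟨e, he⟩ _
      by_cases he₁ : e ∈ T₁
      · have ht := (hc e he).1 he₁
        simp [hf, he₁, ht]
      · by_cases he₀ : e ∈ T₀
        · have ht := (hc e he).2 he₀
          simp [hf, he₁, he₀, ht]
        · simp [hf, he₁, he₀]
    · rw [if_neg hc]
      unfold cylEvent at hc
      obtain ⟨e, hce⟩ := not_forall.1 hc
      obtain ⟨he, hbad⟩ := not_forall.1 hce
      refine (Finset.prod_eq_zero (Finset.mem_univ ⟨e, he⟩) ?_).symm
      by_cases he₁ : e ∈ T₁
      · have hωf : ω ⟨e, he⟩ = false := by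
          cases hω : ω ⟨e, he⟩ with
          | false => rfl
          | true =>
            exact (hbad ⟨fun _ => hω, fun h0 =>
              absurd h0 (Finset.disjoint_left.1 hd he₁)⟩).elim
        simp [hf, he₁, hωf]
      · by_cases he₀ : e ∈ T₀
        · have hωt : ω ⟨e, he⟩ = true := by
            cases hω : ω ⟨e, he⟩ with
            | true => rfl
            | false => exact (hbad ⟨fun h1 => absurd h1 he₁, fun _ => hω⟩).elim
          simp [hf, he₁, he₀, hωt]
        · exact (hbad ⟨fun h1 => absurd h1 he₁, fun h0 => absurd h0 he₀⟩).elim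
  calc ∑ ω : {e : Sym2 V // ¬ e.IsDiag} → Bool, (if cylEvent T₁ T₀ ω then wgt p ω else 0)
      = ∑ ω : {e : Sym2 V // ¬ e.IsDiag} → Bool, ∏ c, f c (ω c) :=
        Finset.sum_congr rfl (fun ω _ => key ω)
    _ = ∏ c, (f c true + f c false) := by
        have h := Finset.prod_univ_sum
          (fun _ : {e : Sym2 V // ¬ e.IsDiag} => (Finset.univ : Finset Bool)) f
        rw [Fintype.piFinset_univ] at h
        rw [← h]
        refine Finset.prod_congr rfl ?_
        intro c _
        rw [Fintype.sum_bool]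
    _ = p ^ T₁.card * (1 - p) ^ T₀.card := by
        have hg : ∀ c : {e : Sym2 V // ¬ e.IsDiag}, f c true + f c false =
            (if c.1 ∈ T₁ then p else if c.1 ∈ T₀ then 1 - p else 1) := by
          intro c
          by_cases h1 : c.1 ∈ T₁
          · simp [hf, h1]
          · by_cases h0 : c.1 ∈ T₀ <;> simp [hf, h1, h0] <;> ring
        rw [Finset.prod_congr rfl (fun c _ => hg c)]
        rw [← Finset.prod_filter_mul_prod_filter_not Finset.univ (fun c => c.1 ∈ T₁)]
        have hA : ∏ c ∈ Finset.univ.filter (fun c : {e : Sym2 V // ¬ e.IsDiag} => c.1 ∈ T₁),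
            (if c.1 ∈ T₁ then p else if c.1 ∈ T₀ then 1 - p else 1) = p ^ T₁.card := by
          rw [Finset.prod_congr rfl (g := fun _ => p) ?_, Finset.prod_const, card_coordFilter _ h₁]
          intro c hc
          rw [if_pos (Finset.mem_filter.1 hc).2]
        have hB : ∏ c ∈ Finset.univ.filter (fun c : {e : Sym2 V // ¬ e.IsDiag} => ¬ c.1 ∈ T₁),
            (if c.1 ∈ T₁ then p else if c.1 ∈ T₀ then 1 - p else 1) = (1 - p) ^ T₀.card := by
          rw [← Finset.prod_filter_mul_prod_filter_not
            (Finset.univ.filter (fun c : {e : Sym2 V // ¬ e.IsDiag} => ¬ c.1 ∈ T₁))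
            (fun c => c.1 ∈ T₀)]
          have hB1 : ∏ c ∈ (Finset.univ.filter
              (fun c : {e : Sym2 V // ¬ e.IsDiag} => ¬ c.1 ∈ T₁)).filter (fun c => c.1 ∈ T₀),
              (if c.1 ∈ T₁ then p else if c.1 ∈ T₀ then 1 - p else 1) = (1 - p) ^ T₀.card := by
            have hset : (Finset.univ.filter
                (fun c : {e : Sym2 V // ¬ e.IsDiag} => ¬ c.1 ∈ T₁)).filter (fun c => c.1 ∈ T₀)
                = Finset.univ.filter (fun c : {e : Sym2 V // ¬ e.IsDiag} => c.1 ∈ T₀) := by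
              ext c
              simp only [Finset.mem_filter, Finset.mem_univ, true_and]
              exact ⟨fun h => h.2, fun h => ⟨fun h1 => (Finset.disjoint_right.1 hd h) h1, h⟩⟩
            rw [hset]
            rw [Finset.prod_congr rfl (g := fun _ => 1 - p) ?_, Finset.prod_const,
              card_coordFilter _ h₀]
            intro c hc
            have hc0 := (Finset.mem_filter.1 hc).2
            rw [if_neg (fun h1 => (Finset.disjoint_right.1 hd hc0) h1), if_pos hc0]
          have hB2 : ∏ c ∈ (Finset.univ.filter
              (fun c : {e : Sym2 V // ¬ e.IsDiag} => ¬ c.1 ∈ T₁)).filter (fun c => ¬ c.1 ∈ T₀),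
              (if c.1 ∈ T₁ then p else if c.1 ∈ T₀ then 1 - p else 1) = 1 := by
            refine Finset.prod_eq_one ?_
            intro c hc
            obtain ⟨hc1, hc0⟩ := Finset.mem_filter.1 hc
            rw [if_neg (Finset.mem_filter.1 hc1).2, if_neg hc0]
          rw [hB1, hB2, mul_one]
        rw [hA, hB]

lemma sum_wgt (p : ℝ) :
    ∑ ω : {e : Sym2 V // ¬ e.IsDiag} → Bool, wgt p ω = 1 := by
  have h := sum_cylinder (V := V) p ∅ ∅ (by simp) (by simp) (by simp)
  simpa [cylEvent] using h

lemma erProb_le_sum {p : ℝ} (h0 : 0 ≤ p) (h1 : p ≤ 1) {A : SimpleGraph V → Prop}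
    {ι : Type*} (W : Finset ι) (B : ι → SimpleGraph V → Prop)
    (h : ∀ G : SimpleGraph V, A G → ∃ w ∈ W, B w G) :
    erProb p A ≤ ∑ w ∈ W, erProb p (B w) := by
  rw [erProb_eq]
  have hpt : ∀ ω : {e : Sym2 V // ¬ e.IsDiag} → Bool,
      (if A (graphOf ω) then wgt p ω else 0) ≤
        ∑ w ∈ W, (if B w (graphOf ω) then wgt p ω else 0) := by
    intro ω
    by_cases hA : A (graphOf ω)
    · rw [if_pos hA]
      obtain ⟨w₀, hw₀, hBw₀⟩ := h _ hA
      have : (if B w₀ (graphOf ω) then wgt p ω else 0) = wgt p ω := if_pos hBw₀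
      calc wgt p ω = _ := this.symm
        _ ≤ _ := Finset.single_le_sum (f := fun w => if B w (graphOf ω) then wgt p ω else 0)
            (fun w _ => ite_wgt_nonneg h0 h1 ω _) hw₀
    · rw [if_neg hA]
      exact Finset.sum_nonneg fun w _ => ite_wgt_nonneg h0 h1 ω _
  calc ∑ ω : {e : Sym2 V // ¬ e.IsDiag} → Bool, (if A (graphOf ω) then wgt p ω else 0)
      ≤ ∑ ω : {e : Sym2 V // ¬ e.IsDiag} → Bool,
        ∑ w ∈ W, (if B w (graphOf ω) then wgt p ω else 0) :=
        Finset.sum_le_sum fun ω _ => hpt ω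
    _ = ∑ w ∈ W, ∑ ω : {e : Sym2 V // ¬ e.IsDiag} → Bool,
        (if B w (graphOf ω) then wgt p ω else 0) := Finset.sum_comm
    _ = ∑ w ∈ W, erProb p (B w) := by
        refine Finset.sum_congr rfl fun w _ => ?_
        rw [erProb_eq]

lemma mem_graphOf_iff {e : Sym2 V} (he : ¬ e.IsDiag) (ω : {e : Sym2 V // ¬ e.IsDiag} → Bool) :
    e ∈ (graphOf ω).edgeSet ↔ ω ⟨e, he⟩ = true := by
  unfold graphOf
  rw [SimpleGraph.edgeSet_fromEdgeSet]
  constructor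
  · rintro ⟨⟨h', hω⟩, _⟩
    convert hω
  · intro hω
    exact ⟨⟨he, hω⟩, he⟩

lemma erProb_subset_edges {p : ℝ} (U : Finset (Sym2 V)) (hU : ∀ e ∈ U, ¬ e.IsDiag) :
    erProb p (fun G => ∀ e ∈ U, e ∈ G.edgeSet) = p ^ U.card := by
  rw [erProb_eq]
  have hcond : ∀ ω : {e : Sym2 V // ¬ e.IsDiag} → Bool,
      (∀ e ∈ U, e ∈ (graphOf ω).edgeSet) ↔ cylEvent U ∅ ω := by
    intro ω
    constructor
    · intro h e he
      refine ⟨fun heU => ?_, fun h0 => absurd h0 (Finset.notMem_empty e)⟩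
      exact (mem_graphOf_iff he ω).1 (h e heU)
    · intro h e heU
      exact (mem_graphOf_iff (hU e heU) ω).2 ((h e (hU e heU)).1 heU)
  refine Eq.trans (Finset.sum_congr rfl fun ω _ =>
    (?_ : _ = (if cylEvent U ∅ ω then wgt p ω else 0))) ?_
  · simp only [hcond ω]
  · rw [sum_cylinder p U ∅ hU (by simp) (by simp)]
    simp

end Prob
section Count

set_option linter.unusedSectionVars false
set_option maxHeartbeats 1000000

variable {V : Type*} [Fintype V]

/-- puzzle part of the witness conditions -/
def puzWit (G : SimpleGraph V) (F : Finset V) (T : Finset (Sym2 V)) : Prop :=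
  (∀ e ∈ T, e ∈ G.edgeSet ∧ ∀ x ∈ e, x ∈ F) ∧ Spans F T ∧ T.card + 1 = F.card

/-- pairs (set, spanning tree) rooted at `v` of size `s` -/
def pairsW (G : SimpleGraph V) (v : V) (s : ℕ) : Finset (Finset V × Finset (Sym2 V)) :=
  Finset.univ.filter (fun FT => v ∈ FT.1 ∧ FT.1.card = s ∧ puzWit G FT.1 FT.2)

/-- edges incident to `F` -/
def incid (G : SimpleGraph V) (F : Finset V) : Finset (Sym2 V) :=
  G.edgeFinset.filter (fun e => ∃ x ∈ e, x ∈ F)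

lemma T_subset_incid {G : SimpleGraph V} {F : Finset V} {T : Finset (Sym2 V)}
    (hT : ∀ e ∈ T, e ∈ G.edgeSet ∧ ∀ x ∈ e, x ∈ F) : T ⊆ incid G F := by
  intro e he
  refine Finset.mem_filter.2 ⟨SimpleGraph.mem_edgeFinset.2 (hT e he).1, ?_⟩
  exact ⟨e.out.1, Sym2.out_fst_mem e, (hT e he).2 _ (Sym2.out_fst_mem e)⟩

lemma handshake_bound {G : SimpleGraph V} {D : ℕ}
    (hdeg : ∀ u : V, (G.neighborSet u).ncard ≤ D) (F : Finset V) (T : Finset (Sym2 V))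
    (hT : ∀ e ∈ T, e ∈ G.edgeSet ∧ ∀ x ∈ e, x ∈ F) :
    (incid G F \ T).card + 2 * T.card ≤ D * F.card := by
  classical
  have hdeg' : ∀ u : V, G.degree u ≤ D := by
    intro u
    have : (G.neighborSet u).ncard = (G.neighborFinset u).card := by
      rw [SimpleGraph.neighborFinset_def, Set.ncard_eq_toFinset_card']
    rw [← SimpleGraph.card_neighborFinset_eq_degree, ← this]
    exact hdeg u
  have key : ∑ u ∈ F, G.degree u = ∑ e ∈ G.edgeFinset, (F.filter (fun u => u ∈ e)).card := by
    have h1 : ∀ u, G.degree u = (G.edgeFinset.filter (fun e => u ∈ e)).card := by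
      intro u
      rw [← SimpleGraph.card_incidenceFinset_eq_degree, SimpleGraph.incidenceFinset_eq_filter]
    rw [Finset.sum_congr rfl (fun u _ => h1 u)]
    simp only [Finset.card_filter]
    exact Finset.sum_comm
  have hsub : T ⊆ incid G F := T_subset_incid hT
  have hsplit : (incid G F \ T).card + 2 * T.card ≤
      ∑ e ∈ G.edgeFinset, (F.filter (fun u => u ∈ e)).card := by
    have hstep1 : ∑ e ∈ incid G F, (F.filter (fun u => u ∈ e)).card ≤
        ∑ e ∈ G.edgeFinset, (F.filter (fun u => u ∈ e)).card :=
      Finset.sum_le_sum_of_subset (Finset.filter_subset _ _)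
    have hstep2 : ∑ e ∈ incid G F, (F.filter (fun u => u ∈ e)).card =
        ∑ e ∈ T, (F.filter (fun u => u ∈ e)).card
          + ∑ e ∈ incid G F \ T, (F.filter (fun u => u ∈ e)).card := by
      rw [← Finset.sum_union (Finset.disjoint_sdiff)]
      congr 1
      rw [Finset.union_sdiff_of_subset hsub]
    have hT2 : ∀ e ∈ T, 2 ≤ (F.filter (fun u => u ∈ e)).card := by
      intro e he
      induction e with
      | _ x y =>
        have hnd : ¬ (s(x, y)).IsDiag := G.not_isDiag_of_mem_edgeSet (hT _ he).1
        have hxy : x ≠ y := by rwa [Sym2.mk_isDiag_iff] at hnd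
        have hx : x ∈ F.filter (fun u => u ∈ s(x, y)) :=
          Finset.mem_filter.2 ⟨(hT _ he).2 x (Sym2.mem_mk_left x y), Sym2.mem_mk_left x y⟩
        have hy : y ∈ F.filter (fun u => u ∈ s(x, y)) :=
          Finset.mem_filter.2 ⟨(hT _ he).2 y (Sym2.mem_mk_right x y), Sym2.mem_mk_right x y⟩
        calc 2 = ({x, y} : Finset V).card := by rw [Finset.card_insert_of_notMem (by simpa using hxy), Finset.card_singleton]
          _ ≤ _ := Finset.card_le_card (by intro z hz; rcases Finset.mem_insert.1 hz with rfl | hz'; exact hx; rw [Finset.mem_singleton.1 hz']; exact hy)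
    have hI1 : ∀ e ∈ incid G F \ T, 1 ≤ (F.filter (fun u => u ∈ e)).card := by
      intro e he
      obtain ⟨x, hxe, hxF⟩ := (Finset.mem_filter.1 (Finset.mem_sdiff.1 he).1).2
      exact Finset.card_pos.2 ⟨x, Finset.mem_filter.2 ⟨hxF, hxe⟩⟩
    calc (incid G F \ T).card + 2 * T.card
        = ∑ _e ∈ incid G F \ T, 1 + ∑ _e ∈ T, 2 := by
          rw [Finset.sum_const, Finset.sum_const, smul_eq_mul, smul_eq_mul]; omega
      _ ≤ ∑ e ∈ incid G F \ T, (F.filter (fun u => u ∈ e)).card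
          + ∑ e ∈ T, (F.filter (fun u => u ∈ e)).card := by
          exact Nat.add_le_add (Finset.sum_le_sum hI1) (Finset.sum_le_sum hT2)
      _ = ∑ e ∈ incid G F, (F.filter (fun u => u ∈ e)).card := by rw [hstep2, Nat.add_comm]
      _ ≤ _ := hstep1
  calc (incid G F \ T).card + 2 * T.card ≤ ∑ e ∈ G.edgeFinset, (F.filter (fun u => u ∈ e)).card := hsplit
    _ = ∑ u ∈ F, G.degree u := key.symm
    _ ≤ ∑ _u ∈ F, D := Finset.sum_le_sum (fun u _ => hdeg' u)
    _ = D * F.card := by rw [Finset.sum_const, smul_eq_mul, mul_comm]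

end Count
section Count2

set_option linter.unusedSectionVars false
set_option maxHeartbeats 1000000

variable {V : Type*} [Fintype V]

/-- the percolation event associated with a witness pair -/
def EvW (G : SimpleGraph V) (w : Finset V × Finset (Sym2 V))
    (ω : {e : Sym2 V // ¬ e.IsDiag} → Bool) : Prop :=
  cylEvent w.2 (incid G w.1 \ w.2) ω

lemma cluster_eq {G : SimpleGraph V} {v : V} {F : Finset V} {T : Finset (Sym2 V)}
    (hv : v ∈ F) (hW : puzWit G F T) {ω : {e : Sym2 V // ¬ e.IsDiag} → Bool}
    (hEv : EvW G (F, T) ω) :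
    ∀ u, u ∈ F ↔ Relation.ReflTransGen
      (fun x y => ∃ h : ¬ (s(x, y)).IsDiag, s(x, y) ∈ G.edgeSet ∧ ω ⟨s(x, y), h⟩ = true) v u := by
  obtain ⟨hT, hSp, hcard⟩ := hW
  intro u
  constructor
  · intro hu
    refine Relation.ReflTransGen.mono ?_ _ _ (hSp v hv u hu)
    intro x y hxy
    have hnd : ¬ (s(x, y)).IsDiag := G.not_isDiag_of_mem_edgeSet (hT _ hxy).1
    exact ⟨hnd, (hT _ hxy).1, (hEv s(x, y) hnd).1 hxy⟩
  · intro hreach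
    induction hreach with
    | refl => exact hv
    | @tail x y hvx hxy ih =>
      obtain ⟨hnd, hedge, hopen⟩ := hxy
      have hinc : s(x, y) ∈ incid G F := by
        refine Finset.mem_filter.2 ⟨SimpleGraph.mem_edgeFinset.2 hedge, ?_⟩
        exact ⟨x, Sym2.mem_mk_left x y, ih⟩
      by_cases hmem : s(x, y) ∈ T
      · exact (hT _ hmem).2 y (Sym2.mem_mk_right x y)
      · have hclosed : ω ⟨s(x, y), hnd⟩ = false :=
          (hEv s(x, y) hnd).2 (Finset.mem_sdiff.2 ⟨hinc, hmem⟩)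
        rw [hopen] at hclosed
        exact absurd hclosed (by simp)

lemma T_eq_open {G : SimpleGraph V} {F : Finset V} {T : Finset (Sym2 V)}
    (hW : puzWit G F T) {ω : {e : Sym2 V // ¬ e.IsDiag} → Bool}
    (hEv : EvW G (F, T) ω) :
    T = (incid G F).filter (fun e => ∃ h : ¬ e.IsDiag, ω ⟨e, h⟩ = true) := by
  obtain ⟨hT, hSp, hcard⟩ := hW
  ext e
  constructor
  · intro he
    have hnd : ¬ e.IsDiag := G.not_isDiag_of_mem_edgeSet (hT _ he).1
    exact Finset.mem_filter.2 ⟨T_subset_incid hT he, hnd, (hEv e hnd).1 he⟩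
  · intro he
    obtain ⟨hinc, hnd, hopen⟩ := Finset.mem_filter.1 he
    by_contra hmem
    have hclosed : ω ⟨e, hnd⟩ = false := (hEv e hnd).2 (Finset.mem_sdiff.2 ⟨hinc, hmem⟩)
    rw [hopen] at hclosed
    exact absurd hclosed (by simp)

lemma EvW_disjoint {G : SimpleGraph V} {v : V} {s : ℕ}
    {w w' : Finset V × Finset (Sym2 V)} (hw : w ∈ pairsW G v s) (hw' : w' ∈ pairsW G v s)
    {ω : {e : Sym2 V // ¬ e.IsDiag} → Bool} (h : EvW G w ω) (h' : EvW G w' ω) : w = w' := by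
  obtain ⟨hv, hcard, hW⟩ := (Finset.mem_filter.1 hw).2
  obtain ⟨hv', hcard', hW'⟩ := (Finset.mem_filter.1 hw').2
  obtain ⟨F, T⟩ := w
  obtain ⟨F', T'⟩ := w'
  have hFF : F = F' := by
    ext u
    rw [cluster_eq hv hW h u, cluster_eq hv' hW' h' u]
  subst hFF
  have e1 : T = (incid G F).filter (fun e => ∃ h : ¬ e.IsDiag, ω ⟨e, h⟩ = true) :=
    T_eq_open hW h
  have e2 : T' = (incid G F).filter (fun e => ∃ h : ¬ e.IsDiag, ω ⟨e, h⟩ = true) :=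
    T_eq_open hW' h'
  rw [e1, e2]

lemma pairsW_card_bound {G : SimpleGraph V} {D : ℕ}
    (hdeg : ∀ u : V, (G.neighborSet u).ncard ≤ D) (hD : 2 ≤ D) {s : ℕ} (hs : 2 ≤ s) (v : V) :
    ((pairsW G v s).card : ℝ) ≤ (D : ℝ) ^ (s - 1) * Real.exp (s + 2) := by
  classical
  set q : ℝ := 1 / (D : ℝ) with hq
  have hD0 : (0 : ℝ) < D := by positivity
  have hq0 : 0 < q := by positivity
  have hD2' : (2 : ℝ) ≤ (D : ℝ) := by exact_mod_cast hD
  have hq1 : q ≤ 1 / 2 := by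
    rw [hq, div_le_div_iff₀ hD0 (by norm_num)]
    nlinarith
  have h1q0 : 0 < 1 - q := by linarith
  have h1q1 : 1 - q ≤ 1 := by linarith
  set K : ℕ := D * s - 2 * (s - 1) with hK
  have hKle : 2 * (s - 1) ≤ D * s := by
    calc 2 * (s - 1) ≤ 2 * s := by omega
      _ ≤ D * s := Nat.mul_le_mul_right s hD
  -- each event has probability q^(s-1) (1-q)^(card) ≥ q^(s-1) (1-q)^K
  have hmeas : ∀ w ∈ pairsW G v s,
      q ^ (s - 1) * (1 - q) ^ K ≤
        ∑ ω : {e : Sym2 V // ¬ e.IsDiag} → Bool, (if EvW G w ω then wgt q ω else 0) := by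
    intro w hw
    obtain ⟨hv, hcard, hT, hSp, hcardT⟩ := (Finset.mem_filter.1 hw).2
    have hnd1 : ∀ e ∈ w.2, ¬ e.IsDiag := fun e he => G.not_isDiag_of_mem_edgeSet (hT e he).1
    have hnd0 : ∀ e ∈ incid G w.1 \ w.2, ¬ e.IsDiag := by
      intro e he
      exact G.not_isDiag_of_mem_edgeSet
        (SimpleGraph.mem_edgeFinset.1 (Finset.mem_filter.1 (Finset.mem_sdiff.1 he).1).1)
    have hdisj : Disjoint w.2 (incid G w.1 \ w.2) := Finset.disjoint_sdiff
    have := sum_cylinder q w.2 (incid G w.1 \ w.2) hnd1 hnd0 hdisj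
    unfold EvW
    rw [this]
    have hc1 : w.2.card = s - 1 := by omega
    have hc0 : (incid G w.1 \ w.2).card ≤ K := by
      have := handshake_bound hdeg w.1 w.2 hT
      rw [hcard] at this
      omega
    rw [hc1]
    have hpow : (1 - q) ^ K ≤ (1 - q) ^ (incid G w.1 \ w.2).card :=
      pow_le_pow_of_le_one (le_of_lt h1q0) h1q1 hc0
    have hqpos : 0 < q ^ (s - 1) := pow_pos hq0 _
    nlinarith [hpow, hqpos]
  -- sum of the event probabilities is at most 1
  have hsum : ∑ w ∈ pairsW G v s,
      (∑ ω : {e : Sym2 V // ¬ e.IsDiag} → Bool, (if EvW G w ω then wgt q ω else 0)) ≤ 1 := by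
    rw [Finset.sum_comm]
    have hle : ∀ ω : {e : Sym2 V // ¬ e.IsDiag} → Bool,
        (∑ w ∈ pairsW G v s, (if EvW G w ω then wgt q ω else 0)) ≤ wgt q ω := by
      intro ω
      by_cases hex : ∃ w₀ ∈ pairsW G v s, EvW G w₀ ω
      · obtain ⟨w₀, hw₀, hEv₀⟩ := hex
        rw [Finset.sum_eq_single_of_mem w₀ hw₀]
        · rw [if_pos hEv₀]
        · intro w hw hne
          rw [if_neg]
          intro hEv
          exact hne (EvW_disjoint hw hw₀ hEv hEv₀)
      · push_neg at hex
        have : ∀ w ∈ pairsW G v s, (if EvW G w ω then wgt q ω else 0) = 0 := by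
          intro w hw
          rw [if_neg (hex w hw)]
        rw [Finset.sum_congr rfl this, Finset.sum_const, smul_zero]
        exact wgt_nonneg (le_of_lt hq0) (by linarith) ω
    calc ∑ ω : {e : Sym2 V // ¬ e.IsDiag} → Bool,
          (∑ w ∈ pairsW G v s, (if EvW G w ω then wgt q ω else 0))
        ≤ ∑ ω : {e : Sym2 V // ¬ e.IsDiag} → Bool, wgt q ω :=
          Finset.sum_le_sum fun ω _ => hle ω
      _ = 1 := sum_wgt q
  have hcount : ((pairsW G v s).card : ℝ) * (q ^ (s - 1) * (1 - q) ^ K) ≤ 1 := by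
    calc ((pairsW G v s).card : ℝ) * (q ^ (s - 1) * (1 - q) ^ K)
        = ∑ _w ∈ pairsW G v s, q ^ (s - 1) * (1 - q) ^ K := by
          rw [Finset.sum_const, nsmul_eq_mul]
      _ ≤ ∑ w ∈ pairsW G v s,
          (∑ ω : {e : Sym2 V // ¬ e.IsDiag} → Bool, (if EvW G w ω then wgt q ω else 0)) :=
          Finset.sum_le_sum hmeas
      _ ≤ 1 := hsum
  -- numeric lower bound on the factor
  have hKform : K = (D - 2) * s + 2 := by
    obtain ⟨d, rfl⟩ : ∃ d, D = d + 2 := ⟨D - 2, by omega⟩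
    have h1 : (d + 2) * s = d * s + 2 * s := by ring
    have h2 : d + 2 - 2 = d := by omega
    rw [hK, h1, h2]
    omega
  have hfac : Real.exp (-(s + 2 : ℝ)) ≤ (1 - q) ^ K := by
    have hD1 : (0 : ℝ) < (D : ℝ) - 1 := by
      have : (2 : ℝ) ≤ (D : ℝ) := by exact_mod_cast hD
      linarith
    have hbase : Real.exp (-(1 / ((D : ℝ) - 1))) ≤ 1 - q := by
      have h1 : 1 + 1 / ((D : ℝ) - 1) ≤ Real.exp (1 / ((D : ℝ) - 1)) := by
        have := Real.add_one_le_exp (1 / ((D : ℝ) - 1))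
        linarith
      have h2 : 1 + 1 / ((D : ℝ) - 1) = (D : ℝ) / ((D : ℝ) - 1) := by
        field_simp; ring
      have h3 : (D : ℝ) / ((D : ℝ) - 1) ≤ Real.exp (1 / ((D : ℝ) - 1)) := by
        rw [← h2]; exact h1
      have h4 : 1 - q = ((D : ℝ) - 1) / (D : ℝ) := by
        rw [hq]; field_simp
      rw [h4, Real.exp_neg]
      have h5 : ((D : ℝ) - 1) / (D : ℝ) = ((D : ℝ) / ((D : ℝ) - 1))⁻¹ := by rw [inv_div]
      rw [h5]
      exact inv_anti₀ (div_pos hD0 hD1) h3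
    calc Real.exp (-(s + 2 : ℝ)) ≤ Real.exp (-(K / ((D : ℝ) - 1))) := by
          apply Real.exp_le_exp.2
          rw [neg_le_neg_iff, div_le_iff₀ hD1]
          have hcast : (K : ℝ) = ((D - 2 : ℕ) : ℝ) * s + 2 := by
            rw [hKform]; push_cast; ring
          have hsub : ((D - 2 : ℕ) : ℝ) = (D : ℝ) - 2 := by
            have : (2 : ℕ) ≤ D := hD
            push_cast [this]
            ring
          rw [hcast, hsub]
          have hs0 : (0 : ℝ) ≤ (s : ℝ) := by positivity
          have hD2 : (2 : ℝ) ≤ (D : ℝ) := by exact_mod_cast hD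
          nlinarith
      _ ≤ (1 - q) ^ K := by
          have := pow_le_pow_left₀ (le_of_lt (Real.exp_pos _)) hbase K
          calc Real.exp (-((K : ℝ) / ((D : ℝ) - 1)))
              = (Real.exp (-(1 / ((D : ℝ) - 1)))) ^ K := by
                rw [← Real.exp_nat_mul]
                congr 1
                ring
            _ ≤ (1 - q) ^ K := this
  have hqpow : q ^ (s - 1) = ((D : ℝ) ^ (s - 1))⁻¹ := by
    rw [hq, one_div, inv_pow]
  have hmain : ((pairsW G v s).card : ℝ) * (((D : ℝ) ^ (s - 1))⁻¹ * Real.exp (-(s + 2 : ℝ))) ≤ 1 := by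
    refine le_trans ?_ hcount
    apply mul_le_mul_of_nonneg_left _ (by positivity)
    rw [hqpow]
    apply mul_le_mul_of_nonneg_left hfac (by positivity)
  have hDpow : (0 : ℝ) < (D : ℝ) ^ (s - 1) := by positivity
  have hexp : (0 : ℝ) < Real.exp (-(s + 2 : ℝ)) := Real.exp_pos _
  calc ((pairsW G v s).card : ℝ)
      = ((pairsW G v s).card : ℝ) * (((D : ℝ) ^ (s - 1))⁻¹ * Real.exp (-(s + 2 : ℝ)))
        * ((D : ℝ) ^ (s - 1) * Real.exp (s + 2 : ℝ)) := by
        rw [Real.exp_neg]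
        field_simp
    _ ≤ 1 * ((D : ℝ) ^ (s - 1) * Real.exp (s + 2 : ℝ)) := by
        apply mul_le_mul_of_nonneg_right hmain (by positivity)
    _ = (D : ℝ) ^ (s - 1) * Real.exp (s + 2 : ℝ) := one_mul _

end Count2
section Assemble

set_option linter.unusedSectionVars false
set_option maxHeartbeats 1000000

variable {V : Type*} [Fintype V]

/-- deterministic part of the witness structure -/
def witFin (G : SimpleGraph V) (m : ℕ) :
    Finset (Finset V × Finset (Sym2 V) × Finset (Sym2 V)) :=
  Finset.univ.filter (fun w =>
    m ≤ w.1.card ∧ w.1.card < 2 * m ∧ puzWit G w.1 w.2.1 ∧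
    w.2.2 ⊆ w.1.sym2 ∧ (∀ e ∈ w.2.2, ¬ e.IsDiag) ∧ w.2.2.card + 1 = w.1.card)

lemma solve_witness {Gpuz Gppl : SimpleGraph V} (h : Solve Gpuz Gppl 1 1 ⊤)
    {m : ℕ} (hm : 2 ≤ m) (hmN : m ≤ Fintype.card V) :
    ∃ w ∈ witFin Gpuz m, ∀ e ∈ w.2.2, e ∈ Gppl.edgeSet := by
  obtain ⟨S, hgood, h1, h2⟩ := exists_witness_set Gpuz Gppl h hm hmN
  obtain ⟨F, T, U, hFS, hT, hSp, hcT, hU, hcU⟩ := hgood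
  have hcardS : S.ncard = F.card := by rw [← hFS, Set.ncard_coe_finset]
  classical
  refine ⟨(F, T, U), Finset.mem_filter.2 ⟨Finset.mem_univ _, ?_, ?_, ⟨hT, hSp, hcT⟩, ?_, ?_, hcU⟩,
    fun e he => (hU e he).1⟩
  · show m ≤ F.card
    omega
  · show F.card < 2 * m
    omega
  · intro e he
    rw [Finset.mem_sym2_iff]
    exact fun y hy => (hU e he).2 y hy
  · intro e he
    exact Gppl.not_isDiag_of_mem_edgeSet (hU e he).1

lemma witFin_slice_card {G : SimpleGraph V} {D : ℕ}
    (hdeg : ∀ u : V, (G.neighborSet u).ncard ≤ D) (hD : 2 ≤ D) {m s : ℕ} (hs : 2 ≤ s)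
    (hms : m ≤ s) :
    ((((witFin G m).filter (fun w => w.1.card = s)).card : ℝ)) ≤
      (Fintype.card V : ℝ) * ((D : ℝ) ^ (s - 1) * Real.exp (s + 2))
        * ((((s + 1).choose 2).choose (s - 1) : ℕ) : ℝ) := by
  classical
  set emb : Finset V × Finset (Sym2 V) → Finset (Finset V × Finset (Sym2 V) × Finset (Sym2 V)) :=
    fun FT => (FT.1.sym2.powersetCard (s - 1)).image (fun U => (FT.1, FT.2, U)) with hemb
  have hsubset : (witFin G m).filter (fun w => w.1.card = s) ⊆
      (Finset.univ.biUnion (fun v : V => pairsW G v s)).biUnion emb := by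
    intro w hw
    obtain ⟨hwit, hcard⟩ := Finset.mem_filter.1 hw
    obtain ⟨_, hm1, hm2, hpw, hUsub, hUnd, hUcard⟩ := Finset.mem_filter.1 hwit
    have hFne : w.1.Nonempty := Finset.card_pos.1 (by omega)
    obtain ⟨v, hv⟩ := hFne
    refine Finset.mem_biUnion.2 ⟨(w.1, w.2.1), ?_, ?_⟩
    · exact Finset.mem_biUnion.2 ⟨v, Finset.mem_univ v,
        Finset.mem_filter.2 ⟨Finset.mem_univ _, hv, hcard, hpw⟩⟩
    · refine Finset.mem_image.2 ⟨w.2.2, ?_, ?_⟩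
      · refine Finset.mem_powersetCard.2 ⟨hUsub, ?_⟩
        have : w.2.2.card + 1 = s := by omega
        omega
      · rfl
  have hcard1 : ((witFin G m).filter (fun w => w.1.card = s)).card ≤
      ∑ FT ∈ Finset.univ.biUnion (fun v : V => pairsW G v s), (emb FT).card :=
    le_trans (Finset.card_le_card hsubset) (Finset.card_biUnion_le)
  have hcard2 : ∀ FT ∈ Finset.univ.biUnion (fun v : V => pairsW G v s),
      (emb FT).card ≤ ((s + 1).choose 2).choose (s - 1) := by
    intro FT hFT
    obtain ⟨v, _, hFT'⟩ := Finset.mem_biUnion.1 hFT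
    have hFcard : FT.1.card = s := (Finset.mem_filter.1 hFT').2.2.1
    rw [hemb]
    calc _ ≤ (FT.1.sym2.powersetCard (s - 1)).card := Finset.card_image_le
      _ = (FT.1.sym2.card).choose (s - 1) := Finset.card_powersetCard _ _
      _ = ((s + 1).choose 2).choose (s - 1) := by rw [Finset.card_sym2, hFcard]
  have hcard3 : ((witFin G m).filter (fun w => w.1.card = s)).card ≤
      (Finset.univ.biUnion (fun v : V => pairsW G v s)).card
        * ((s + 1).choose 2).choose (s - 1) := by
    calc ((witFin G m).filter (fun w => w.1.card = s)).card
        ≤ _ := hcard1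
      _ ≤ ∑ _FT ∈ Finset.univ.biUnion (fun v : V => pairsW G v s),
          ((s + 1).choose 2).choose (s - 1) := Finset.sum_le_sum hcard2
      _ = _ := by rw [Finset.sum_const, smul_eq_mul]
  have hcard4 : ((Finset.univ.biUnion (fun v : V => pairsW G v s)).card : ℝ) ≤
      (Fintype.card V : ℝ) * ((D : ℝ) ^ (s - 1) * Real.exp (s + 2)) := by
    have h1 : (Finset.univ.biUnion (fun v : V => pairsW G v s)).card ≤
        ∑ v : V, (pairsW G v s).card := Finset.card_biUnion_le
    have h2 : ((∑ v : V, (pairsW G v s).card : ℕ) : ℝ) ≤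
        (Fintype.card V : ℝ) * ((D : ℝ) ^ (s - 1) * Real.exp (s + 2)) := by
      push_cast
      calc ∑ v : V, ((pairsW G v s).card : ℝ)
          ≤ ∑ _v : V, (D : ℝ) ^ (s - 1) * Real.exp (s + 2) :=
            Finset.sum_le_sum (fun v _ => pairsW_card_bound hdeg hD hs v)
        _ = (Fintype.card V : ℝ) * ((D : ℝ) ^ (s - 1) * Real.exp (s + 2)) := by
            rw [Finset.sum_const, nsmul_eq_mul, Finset.card_univ]
    calc ((Finset.univ.biUnion (fun v : V => pairsW G v s)).card : ℝ)
        ≤ ((∑ v : V, (pairsW G v s).card : ℕ) : ℝ) := by exact_mod_cast h1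
      _ ≤ _ := h2
  calc (((witFin G m).filter (fun w => w.1.card = s)).card : ℝ)
      ≤ ((Finset.univ.biUnion (fun v : V => pairsW G v s)).card : ℝ)
        * ((((s + 1).choose 2).choose (s - 1) : ℕ) : ℝ) := by exact_mod_cast hcard3
    _ ≤ (Fintype.card V : ℝ) * ((D : ℝ) ^ (s - 1) * Real.exp (s + 2))
        * ((((s + 1).choose 2).choose (s - 1) : ℕ) : ℝ) := by
        apply mul_le_mul_of_nonneg_right hcard4 (by positivity)

lemma solveProb_le_sum {Gpuz : SimpleGraph V} {D : ℕ}
    (hdeg : ∀ u : V, (Gpuz.neighborSet u).ncard ≤ D) (hD : 2 ≤ D) {p : ℝ}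
    (hp0 : 0 ≤ p) (hp1 : p ≤ 1) {m : ℕ} (hm : 2 ≤ m) (hmN : m ≤ Fintype.card V) :
    solveProb Gpuz 1 1 ⊤ p ≤ ∑ s ∈ Finset.Ico m (2 * m),
      (Fintype.card V : ℝ) * ((D : ℝ) ^ (s - 1) * Real.exp (s + 2))
        * ((((s + 1).choose 2).choose (s - 1) : ℕ) : ℝ) * p ^ (s - 1) := by
  classical
  have step1 : solveProb Gpuz 1 1 ⊤ p ≤
      ∑ w ∈ witFin Gpuz m, erProb p (fun G => ∀ e ∈ w.2.2, e ∈ G.edgeSet) := by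
    unfold solveProb
    exact erProb_le_sum hp0 hp1 (witFin Gpuz m) _
      (fun G hG => solve_witness hG hm hmN)
  have step2 : ∑ w ∈ witFin Gpuz m, erProb p (fun G => ∀ e ∈ w.2.2, e ∈ G.edgeSet)
      = ∑ w ∈ witFin Gpuz m, p ^ w.2.2.card := by
    refine Finset.sum_congr rfl (fun w hw => ?_)
    obtain ⟨_, hcond⟩ := Finset.mem_filter.1 hw
    exact erProb_subset_edges w.2.2 hcond.2.2.2.2.1
  have step3 : ∑ w ∈ witFin Gpuz m, p ^ w.2.2.card =
      ∑ s ∈ Finset.Ico m (2 * m),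
        ∑ w ∈ (witFin Gpuz m).filter (fun w => w.1.card = s), p ^ w.2.2.card := by
    refine (Finset.sum_fiberwise_of_maps_to ?_ _).symm
    intro w hw
    obtain ⟨_, hcond⟩ := Finset.mem_filter.1 hw
    exact Finset.mem_Ico.2 ⟨hcond.1, hcond.2.1⟩
  have step4 : ∀ s ∈ Finset.Ico m (2 * m),
      ∑ w ∈ (witFin Gpuz m).filter (fun w => w.1.card = s), p ^ w.2.2.card ≤
        (Fintype.card V : ℝ) * ((D : ℝ) ^ (s - 1) * Real.exp (s + 2))
          * ((((s + 1).choose 2).choose (s - 1) : ℕ) : ℝ) * p ^ (s - 1) := by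
    intro s hsIco
    have hs2 : 2 ≤ s := le_trans hm (Finset.mem_Ico.1 hsIco).1
    have heach : ∀ w ∈ (witFin Gpuz m).filter (fun w => w.1.card = s),
        p ^ w.2.2.card = p ^ (s - 1) := by
      intro w hw
      obtain ⟨hwit, hcs⟩ := Finset.mem_filter.1 hw
      obtain ⟨_, hcond⟩ := Finset.mem_filter.1 hwit
      have : w.2.2.card = s - 1 := by omega
      rw [this]
    rw [Finset.sum_congr rfl heach, Finset.sum_const, nsmul_eq_mul]
    apply mul_le_mul_of_nonneg_right _ (by positivity)
    exact witFin_slice_card hdeg hD hs2 (Finset.mem_Ico.1 hsIco).1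
  calc solveProb Gpuz 1 1 ⊤ p ≤ _ := step1
    _ = _ := step2
    _ = _ := step3
    _ ≤ _ := Finset.sum_le_sum step4

lemma solveProb_nonneg {Gpuz : SimpleGraph V} {p : ℝ} (hp0 : 0 ≤ p) (hp1 : p ≤ 1) :
    0 ≤ solveProb Gpuz 1 1 ⊤ p := by
  unfold solveProb
  rw [erProb_eq]
  exact Finset.sum_nonneg fun ω _ => ite_wgt_nonneg hp0 hp1 ω _

end Assemble
section Prelim

set_option linter.unusedSectionVars false
set_option maxHeartbeats 1000000

variable {V : Type*} [Fintype V]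

lemma walk_support_small {G : SimpleGraph V} (hdeg1 : ∀ v : V, (G.neighborSet v).ncard ≤ 1)
    {x y : V} (W : G.Walk x y) : y = x ∨ y ∈ G.neighborSet x := by
  induction W with
  | nil => exact Or.inl rfl
  | @cons a b c hab W ih =>
    have hb : b ∈ G.neighborSet a := hab
    rcases ih with rfl | hc
    · exact Or.inr hb
    · -- c ∈ neighborSet b, and a ∈ neighborSet b, so c = a
      have ha : a ∈ G.neighborSet b := hab.symm
      have : c = a := by
        have h1 := hdeg1 b
        have hfin : (G.neighborSet b).Finite := Set.toFinite _
        rcases (Set.ncard_le_one_iff_eq (Set.toFinite _)).1 h1 with h | ⟨u, h⟩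
        · rw [h] at hc; exact absurd hc (Set.notMem_empty c)
        · rw [h] at hc ha
          rw [Set.mem_singleton_iff.1 hc, Set.mem_singleton_iff.1 ha]
      subst this
      exact Or.inl rfl

lemma two_le_maxdeg {G : SimpleGraph V} (hconn : G.Connected) (h3 : 3 ≤ Fintype.card V)
    {D : ℕ} (hdeg : ∀ v : V, (G.neighborSet v).ncard ≤ D) : 2 ≤ D := by
  by_contra hlt
  have hD1 : ∀ v : V, (G.neighborSet v).ncard ≤ 1 := fun v => le_trans (hdeg v) (by omega)
  -- pick two distinct vertices
  have h1 : 1 < Fintype.card V := by omega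
  obtain ⟨a, b, hab⟩ := Fintype.exists_pair_of_one_lt_card h1
  obtain ⟨Wab⟩ := hconn.preconnected b a
  rcases walk_support_small hD1 Wab with rfl | haB
  · exact hab rfl
  · -- get c outside {a, b}
    have hcex : ∃ c : V, c ≠ a ∧ c ≠ b := by
      by_contra hno
      push_neg at hno
      have : (Finset.univ : Finset V) ⊆ {a, b} := by
        intro x _
        rcases Classical.em (x = a) with rfl | hxa
        · exact Finset.mem_insert_self _ _
        · rcases hno x hxa with rfl
          exact Finset.mem_insert_of_mem (Finset.mem_singleton_self _)
      have hcard : Fintype.card V ≤ 2 := by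
        calc Fintype.card V = (Finset.univ : Finset V).card := (Finset.card_univ).symm
          _ ≤ ({a, b} : Finset V).card := Finset.card_le_card this
          _ ≤ 2 := Finset.card_insert_le _ _ |>.trans (by simp)
      omega
    obtain ⟨c, hca, hcb⟩ := hcex
    obtain ⟨Wcb⟩ := hconn.preconnected c b
    rcases walk_support_small hD1 Wcb with rfl | hbC
    · exact hcb rfl
    · -- b ∈ nbrs c hence c ∈ nbrs b; also a ∈ nbrs b; so c = a
      have hcB : c ∈ G.neighborSet b := (SimpleGraph.mem_neighborSet _ _ _).2
        ((SimpleGraph.mem_neighborSet _ _ _).1 hbC).symm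
      have h1b := hD1 b
      rcases (Set.ncard_le_one_iff_eq (Set.toFinite _)).1 h1b with h | ⟨u, h⟩
      · rw [h] at haB; exact absurd haB (Set.notMem_empty a)
      · rw [h] at haB hcB
        exact hca (by rw [Set.mem_singleton_iff.1 hcB, Set.mem_singleton_iff.1 haB])

end Prelim

section Anal

lemma eta_nonneg (D : ℕ → ℕ) (hD : ∀ N, 1 ≤ D N) :
    0 ≤ Filter.limsup (fun N : ℕ => Real.log (D N) / Real.log N) atTop := by
  have hf : ∀ N : ℕ, 0 ≤ Real.log (D N) / Real.log N := by
    intro N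
    apply div_nonneg
    · apply Real.log_natCast_nonneg
    · rcases Nat.eq_zero_or_pos N with rfl | hN
      · simp
      · apply Real.log_natCast_nonneg
  rw [Filter.limsup_eq]
  rcases Set.eq_empty_or_nonempty {a : ℝ | ∀ᶠ n in atTop, Real.log (D n) / Real.log n ≤ a}
    with h | h
  · rw [h, Real.sInf_empty]
  · refine le_csInf h ?_
    intro b hb
    obtain ⟨n, hn⟩ := hb.exists
    exact le_trans (hf n) hn

lemma pow_div_factorial_le_exp (x : ℝ) (hx : 0 ≤ x) (k : ℕ) :
    x ^ k / k.factorial ≤ Real.exp x := by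
  have h1 : x ^ k / k.factorial ≤ ∑ i ∈ Finset.range (k + 1), x ^ i / i.factorial :=
    Finset.single_le_sum (f := fun i => x ^ i / (i.factorial : ℝ))
      (fun i _ => by positivity) (Finset.self_mem_range_succ k)
  exact le_trans h1 (Real.sum_le_exp_of_nonneg hx (k + 1))

lemma choose_le_real (M k : ℕ) (hk : 1 ≤ k) :
    ((M.choose k : ℕ) : ℝ) ≤ (Real.exp 1 * M / k) ^ k := by
  have h1 : ((M.choose k : ℕ) : ℝ) ≤ (M : ℝ) ^ k / k.factorial :=
    Nat.choose_le_pow_div k M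
  have h2 : ((k : ℝ)) ^ k / k.factorial ≤ Real.exp k := pow_div_factorial_le_exp k (by positivity) k
  have hk0 : (0 : ℝ) < k := by exact_mod_cast hk
  have hfac0 : (0 : ℝ) < k.factorial := by exact_mod_cast k.factorial_pos
  have h3 : ((k : ℝ)) ^ k ≤ Real.exp k * k.factorial := by
    rw [div_le_iff₀ hfac0] at h2
    exact h2
  have hexpk : Real.exp (k : ℝ) = Real.exp 1 ^ k := by
    rw [← Real.exp_nat_mul]
    norm_num
  calc ((M.choose k : ℕ) : ℝ) ≤ (M : ℝ) ^ k / k.factorial := h1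
    _ ≤ (Real.exp 1 * M / k) ^ k := by
        rw [div_pow, mul_pow]
        rw [div_le_div_iff₀ hfac0 (by positivity)]
        calc (M : ℝ) ^ k * (k : ℝ) ^ k ≤ (M : ℝ) ^ k * (Real.exp k * k.factorial) := by
              apply mul_le_mul_of_nonneg_left h3 (by positivity)
          _ = Real.exp 1 ^ k * (M : ℝ) ^ k * k.factorial := by
              rw [hexpk]; ring
    
end Anal
section Anal2

set_option maxHeartbeats 1000000

lemma convexOn_mul_log_shift {a : ℝ} (ha : 0 < a) :
    ConvexOn ℝ (Set.Ici (0 : ℝ)) (fun u => u * Real.log (a * u)) := by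
  have heq : ∀ u ∈ Set.Ici (0 : ℝ), u * Real.log (a * u)
      = u * Real.log u + Real.log a * u := by
    intro u hu
    rcases eq_or_lt_of_le (Set.mem_Ici.1 hu) with rfl | hu0
    · simp
    · rw [Real.log_mul (ne_of_gt ha) (ne_of_gt hu0)]
      ring
  have hlin : ConvexOn ℝ (Set.Ici (0 : ℝ)) (fun u => Real.log a * u) := by
    refine ⟨convex_Ici 0, ?_⟩
    intro x _ y _ α β _ _ _
    refine le_of_eq ?_
    simp only [smul_eq_mul]
    ring
  have hsum := Real.convexOn_mul_log.add hlin
  refine ⟨convex_Ici 0, ?_⟩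
  intro x hx y hy α β hα hβ hαβ
  have hmem : α * x + β * y ∈ Set.Ici (0 : ℝ) := by
    have := (convex_Ici (0 : ℝ)) hx hy hα hβ hαβ
    simpa [smul_eq_mul] using this
  have h := hsum.2 hx hy hα hβ hαβ
  simp only [smul_eq_mul, Pi.add_apply] at h ⊢
  rw [heq _ hmem, heq _ hx, heq _ hy]
  ring_nf at h ⊢
  linarith [h]

lemma analytic_core {μ : ℝ} (hμ0 : 0 < μ) (h1 : μ < 2 * Real.exp (-3 : ℝ))
    (h2 : μ < Real.exp (-5 / 2 : ℝ)) :
    ∃ δ : ℝ, 0 < δ ∧ ∃ L₀ : ℝ, 3 ≤ L₀ ∧ ∀ L : ℝ, L₀ ≤ L → ∀ s : ℕ,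
      ⌈L⌉₊ + 1 ≤ s → s < 2 * (⌈L⌉₊ + 1) →
      (Real.exp 2 * μ * s * (s + 1) / (2 * ((s : ℝ) - 1) * L)) ^ (s - 1)
        ≤ Real.exp (-(1 + δ) * L) := by
  set a : ℝ := Real.exp 2 * μ / 2 with hadef
  have ha0 : 0 < a := by positivity
  have hloga : Real.log a < -1 := by
    have hlogμ : Real.log μ < Real.log 2 + (-3) := by
      have := Real.log_lt_log hμ0 h1
      rwa [Real.log_mul (by norm_num) (ne_of_gt (Real.exp_pos _)), Real.log_exp] at this
    have : Real.log a = 2 + Real.log μ - Real.log 2 := by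
      rw [hadef, Real.log_div (by positivity) (by norm_num),
        Real.log_mul (ne_of_gt (Real.exp_pos _)) (ne_of_gt hμ0), Real.log_exp]
    rw [this]
    linarith
  have hlog2a : 2 * Real.log (2 * a) < -1 := by
    have h2a : 2 * a = Real.exp 2 * μ := by rw [hadef]; ring
    have hlogμ : Real.log μ < -5 / 2 := by
      have := Real.log_lt_log hμ0 h2
      rwa [Real.log_exp] at this
    rw [h2a, Real.log_mul (ne_of_gt (Real.exp_pos _)) (ne_of_gt hμ0), Real.log_exp]
    linarith
  set ε : ℝ := min (-1 - Real.log a) (-1 - 2 * Real.log (2 * a)) with hεdef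
  have hε0 : 0 < ε := by
    rw [hεdef]
    apply lt_min <;> linarith
  have hga : Real.log a ≤ -1 - ε := by
    have := min_le_left (-1 - Real.log a) (-1 - 2 * Real.log (2 * a))
    rw [← hεdef] at this
    linarith
  have hgb : 2 * Real.log (2 * a) ≤ -1 - ε := by
    have := min_le_right (-1 - Real.log a) (-1 - 2 * Real.log (2 * a))
    rw [← hεdef] at this
    linarith
  set g : ℝ → ℝ := fun u => u * Real.log (a * u) with hgdef
  have hconv : ConvexOn ℝ (Set.Ici (0 : ℝ)) g := convexOn_mul_log_shift ha0
  set L₁ : ℝ := max 3 (max (2 * (2 * |Real.log (2 * a)| + 3) / ε) (16 / ε)) with hL₁def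
  refine ⟨ε / 4, by positivity, L₁, le_max_left _ _, ?_⟩
  intro L hL s hs1 hs2
  have hL3 : (3 : ℝ) ≤ L := le_trans (le_max_left _ _) hL
  have hL0 : (0 : ℝ) < L := by linarith
  -- bound on g on the segment [1, B]
  set B : ℝ := 2 + 2 / L with hBdef
  have hB2 : 2 ≤ B := by
    rw [hBdef]
    have : 0 < 2 / L := by positivity
    linarith
  have hB3 : B ≤ 3 := by
    rw [hBdef]
    have : 2 / L ≤ 1 := by
      rw [div_le_one hL0]; linarith
    linarith
  have hgB : g B ≤ -1 - ε / 2 := by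
    have hlogB2 : Real.log (a * B) ≤ Real.log (2 * a) + 1 / L := by
      have hfact : a * B = (2 * a) * (1 + 1 / L) := by
        rw [hBdef]; field_simp
      rw [hfact, Real.log_mul (by positivity) (by positivity)]
      have : Real.log (1 + 1 / L) ≤ 1 / L := by
        have := Real.log_le_sub_one_of_pos (show (0:ℝ) < 1 + 1/L by positivity)
        linarith
      linarith
    have hgBle : g B ≤ B * (Real.log (2 * a) + 1 / L) := by
      rw [hgdef]
      exact mul_le_mul_of_nonneg_left hlogB2 (by linarith)
    have hexpand : B * (Real.log (2 * a) + 1 / L)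
        ≤ 2 * Real.log (2 * a) + (2 * |Real.log (2 * a)| + 3) / L := by
      rw [hBdef]
      have habs : Real.log (2 * a) ≤ |Real.log (2 * a)| := le_abs_self _
      have h1L : 0 < 1 / L := by positivity
      have hexp : (2 + 2 / L) * (Real.log (2 * a) + 1 / L)
          = 2 * Real.log (2 * a) + (2 / L) * Real.log (2 * a) + (2 + 2 / L) / L := by
        field_simp
        
      rw [hexp]
      have hb1 : (2 / L) * Real.log (2 * a) ≤ (2 / L) * |Real.log (2 * a)| :=
        mul_le_mul_of_nonneg_left habs (by positivity)
      have hb2 : (2 + 2 / L) / L ≤ 3 / L := by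
        have h2L : (2 : ℝ) + 2 / L ≤ 3 := by
          have : 2 / L ≤ 1 := by rw [div_le_one hL0]; linarith
          linarith
        exact div_le_div_of_nonneg_right h2L (le_of_lt hL0)
      have heq2 : (2 / L) * |Real.log (2 * a)| + 3 / L = (2 * |Real.log (2 * a)| + 3) / L := by
        field_simp
      linarith
    have hLbig : (2 * |Real.log (2 * a)| + 3) / L ≤ ε / 2 := by
      have hL₁ : 2 * (2 * |Real.log (2 * a)| + 3) / ε ≤ L :=
        le_trans (le_trans (le_max_left _ _) (le_max_right 3 _)) hL
      rw [div_le_iff₀ hL0]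
      rw [div_le_iff₀ hε0] at hL₁
      nlinarith [abs_nonneg (Real.log (2 * a))]
    calc g B ≤ B * (Real.log (2 * a) + 1 / L) := hgBle
      _ ≤ 2 * Real.log (2 * a) + (2 * |Real.log (2 * a)| + 3) / L := hexpand
      _ ≤ (-1 - ε) + ε / 2 := by linarith
      _ = -1 - ε / 2 := by ring
  have hg1 : g 1 ≤ -1 - ε := by
    rw [hgdef]
    simp only [mul_one, one_mul]
    exact hga
  have hgseg : ∀ u : ℝ, 1 ≤ u → u ≤ B → g u ≤ -1 - ε / 2 := by
    intro u hu1 huB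
    have h1B : (1 : ℝ) ≤ B := by linarith
    have := hconv.le_on_segment (Set.mem_Ici.2 (by norm_num : (0:ℝ) ≤ 1))
      (Set.mem_Ici.2 (by linarith : (0:ℝ) ≤ B))
      (by rw [segment_eq_Icc h1B]; exact Set.mem_Icc.2 ⟨hu1, huB⟩)
    calc g u ≤ max (g 1) (g B) := this
      _ ≤ -1 - ε / 2 := max_le (by linarith) hgB
  -- now the per-s computation
  have hs3 : 3 ≤ s := by
    have : 3 ≤ ⌈L⌉₊ := by
      have := Nat.le_ceil L
      have h3L : (3 : ℝ) ≤ ⌈L⌉₊ := le_trans hL3 this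
      exact_mod_cast h3L
    omega
  have hsR : (3 : ℝ) ≤ (s : ℝ) := by exact_mod_cast hs3
  have hs1R : (0 : ℝ) < (s : ℝ) - 1 := by linarith
  set u : ℝ := ((s : ℝ) - 1) / L with hudef
  have hu1 : 1 ≤ u := by
    rw [hudef, le_div_iff₀ hL0, one_mul]
    have hceil : L ≤ ⌈L⌉₊ := Nat.le_ceil L
    have : (⌈L⌉₊ : ℝ) ≤ (s : ℝ) - 1 := by
      have : ⌈L⌉₊ ≤ s - 1 := by omega
      have h' : ((⌈L⌉₊ : ℕ) : ℝ) ≤ ((s - 1 : ℕ) : ℝ) := by exact_mod_cast this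
      rwa [Nat.cast_sub (by omega), Nat.cast_one] at h'
    linarith
  have huB : u ≤ B := by
    rw [hudef, hBdef, div_le_iff₀ hL0]
    have hceil2 : (⌈L⌉₊ : ℝ) < L + 1 := Nat.ceil_lt_add_one (by linarith)
    have hsle : (s : ℝ) - 1 ≤ 2 * (⌈L⌉₊ : ℝ) := by
      have : s - 1 ≤ 2 * ⌈L⌉₊ := by omega
      have h' : ((s - 1 : ℕ) : ℝ) ≤ ((2 * ⌈L⌉₊ : ℕ) : ℝ) := by exact_mod_cast this
      rwa [Nat.cast_sub (by omega), Nat.cast_one, Nat.cast_mul, Nat.cast_two] at h'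
    calc (s : ℝ) - 1 ≤ 2 * (⌈L⌉₊ : ℝ) := hsle
      _ ≤ 2 * (L + 1) := by linarith
      _ = (2 + 2 / L) * L := by field_simp
  set Y : ℝ := Real.exp 2 * μ * s * (s + 1) / (2 * ((s : ℝ) - 1) * L) with hYdef
  have hY0 : 0 < Y := by
    rw [hYdef]
    have he2 : (0:ℝ) < Real.exp 2 := Real.exp_pos 2
    positivity
  have hYeq : Y = (a * u) * ((s : ℝ) * ((s : ℝ) + 1) / (((s : ℝ) - 1) ^ 2)) := by
    rw [hYdef, hadef, hudef]
    field_simp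
    
  have hlogY : Real.log Y ≤ Real.log (a * u) + 4 / ((s : ℝ) - 1) := by
    have hau0 : 0 < a * u := by positivity
    have hrat0 : 0 < (s : ℝ) * ((s : ℝ) + 1) / (((s : ℝ) - 1) ^ 2) := by positivity
    rw [hYeq, Real.log_mul (ne_of_gt hau0) (ne_of_gt hrat0)]
    have hratlog : Real.log ((s : ℝ) * ((s : ℝ) + 1) / (((s : ℝ) - 1) ^ 2))
        ≤ 4 / ((s : ℝ) - 1) := by
      have hx := Real.log_le_sub_one_of_pos hrat0
      have hkey : (s : ℝ) * ((s : ℝ) + 1) / (((s : ℝ) - 1) ^ 2) - 1 ≤ 4 / ((s : ℝ) - 1) := by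
        rw [div_sub_one (by positivity), div_le_div_iff₀ (by positivity) hs1R]
        nlinarith
      linarith
    linarith
  have hmain : ((s : ℝ) - 1) * Real.log Y ≤ -(1 + ε / 4) * L := by
    have hg_u : g u ≤ -1 - ε / 2 := hgseg u hu1 huB
    have hsplit : ((s : ℝ) - 1) * Real.log Y
        ≤ ((s : ℝ) - 1) * Real.log (a * u) + 4 := by
      have h4 : ((s : ℝ) - 1) * (4 / ((s : ℝ) - 1)) = 4 := by field_simp
      calc ((s : ℝ) - 1) * Real.log Y
          ≤ ((s : ℝ) - 1) * (Real.log (a * u) + 4 / ((s : ℝ) - 1)) :=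
            mul_le_mul_of_nonneg_left hlogY (by linarith)
        _ = ((s : ℝ) - 1) * Real.log (a * u) + 4 := by rw [mul_add, h4]
    have hLg : ((s : ℝ) - 1) * Real.log (a * u) = L * g u := by
      rw [hgdef, hudef]
      field_simp
    have hL16 : 16 / ε ≤ L :=
      le_trans (le_trans (le_max_right _ _) (le_max_right 3 _)) hL
    have h16L : 4 ≤ ε / 4 * L := by
      rw [div_le_iff₀ hε0] at hL16
      nlinarith
    calc ((s : ℝ) - 1) * Real.log Y ≤ ((s : ℝ) - 1) * Real.log (a * u) + 4 := hsplit
      _ = L * g u + 4 := by rw [hLg]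
      _ ≤ L * (-1 - ε / 2) + 4 := by nlinarith
      _ ≤ -(1 + ε / 4) * L := by nlinarith
  -- convert to pow
  have hpow : Y ^ (s - 1) = Real.exp (((s : ℝ) - 1) * Real.log Y) := by
    have hcast : ((s - 1 : ℕ) : ℝ) = (s : ℝ) - 1 := by
      rw [Nat.cast_sub (by omega), Nat.cast_one]
    rw [← hcast, Real.exp_nat_mul, Real.exp_log hY0]
  rw [hpow]
  exact Real.exp_le_exp.2 hmain

end Anal2
section Final

set_option maxHeartbeats 2000000

lemma log_le_sub_two {x : ℝ} (hx : 4 ≤ x) : Real.log x ≤ x - 2 := by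
  have hx0 : (0 : ℝ) < x := by linarith
  have hs : Real.log x = 2 * Real.log (Real.sqrt x) := by
    rw [Real.log_sqrt (le_of_lt hx0)]; ring
  have h1 : Real.log (Real.sqrt x) ≤ Real.sqrt x - 1 :=
    Real.log_le_sub_one_of_pos (Real.sqrt_pos.2 hx0)
  have h2 : 2 ≤ Real.sqrt x := by
    have : Real.sqrt 4 ≤ Real.sqrt x := Real.sqrt_le_sqrt hx
    have h4 : Real.sqrt 4 = 2 := by
      rw [show (4 : ℝ) = 2 ^ 2 by norm_num, Real.sqrt_sq (by norm_num : (0:ℝ) ≤ 2)]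
    linarith
  have h3 : Real.sqrt x * Real.sqrt x = x := Real.mul_self_sqrt (le_of_lt hx0)
  nlinarith

lemma tendsto_aux (δ : ℝ) (hδ0 : 0 < δ) :
    Tendsto (fun N : ℕ => Real.exp 3 * (Real.log N + 2) * Real.exp (-δ * Real.log N))
      atTop (nhds 0) := by
  have h1 : Tendsto (fun y : ℝ => Real.exp 3 / δ * (y * Real.exp (-y))
      + 2 * Real.exp 3 * Real.exp (-y)) atTop (nhds 0) := by
    have ha : Tendsto (fun y : ℝ => y * Real.exp (-y)) atTop (nhds 0) := by
      have := Real.tendsto_pow_mul_exp_neg_atTop_nhds_zero 1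
      simpa using this
    have hb : Tendsto (fun y : ℝ => Real.exp (-y)) atTop (nhds 0) :=
      Real.tendsto_exp_neg_atTop_nhds_zero
    have := (ha.const_mul (Real.exp 3 / δ)).add (hb.const_mul (2 * Real.exp 3))
    simpa using this
  have h2 : Tendsto (fun x : ℝ => δ * x) atTop atTop :=
    Tendsto.const_mul_atTop hδ0 tendsto_id
  have h3 : Tendsto (fun x : ℝ => Real.exp 3 * (x + 2) * Real.exp (-δ * x)) atTop (nhds 0) := by
    have hcomp := h1.comp h2
    have heq : (fun x : ℝ => Real.exp 3 * (x + 2) * Real.exp (-δ * x))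
        = (fun y : ℝ => Real.exp 3 / δ * (y * Real.exp (-y))
            + 2 * Real.exp 3 * Real.exp (-y)) ∘ (fun x : ℝ => δ * x) := by
      funext x
      simp only [Function.comp_apply]
      have : -(δ * x) = -δ * x := by ring
      rw [this]
      field_simp
    rw [heq]
    exact hcomp
  have h4 : Tendsto (fun N : ℕ => Real.log N) atTop atTop :=
    Real.tendsto_log_atTop.comp tendsto_natCast_atTop_atTop
  exact h3.comp h4

theorem stmt0' (G : (N : ℕ) → SimpleGraph (Fin N)) (D : ℕ → ℕ)
    (hD : ∀ N, 1 ≤ D N)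
    (hconn : ∀ N, 1 ≤ N → (G N).Connected)
    (hdeg : ∀ N (v : Fin N), ((G N).neighborSet v).ncard ≤ D N)
    (μ η : ℝ) (hμpos : 0 < μ)
    (hη : Filter.limsup (fun N : ℕ => Real.log (D N) / Real.log N) atTop = η)
    (hμ : μ < min (2 * Real.exp (-(3 + η))) (Real.exp (-(5 + η) / 2))) :
    Tendsto (fun N : ℕ => solveProb (G N) 1 1 ⊤ (μ / (D N * Real.log N)))
      atTop (nhds 0) := by
  have hη0 : 0 ≤ η := hη ▸ eta_nonneg D hD
  have h1 : μ < 2 * Real.exp (-3 : ℝ) := by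
    have := lt_of_lt_of_le hμ (min_le_left _ _)
    have hexp : Real.exp (-(3 + η)) ≤ Real.exp (-3 : ℝ) := Real.exp_le_exp.2 (by linarith)
    linarith
  have h2 : μ < Real.exp (-5 / 2 : ℝ) := by
    have := lt_of_lt_of_le hμ (min_le_right _ _)
    have hexp : Real.exp (-(5 + η) / 2) ≤ Real.exp (-5 / 2 : ℝ) := Real.exp_le_exp.2 (by linarith)
    linarith
  have hμ1 : μ < 2 := by
    have : Real.exp (-3 : ℝ) < 1 := by
      rw [Real.exp_lt_one_iff]
      norm_num
    linarith
  obtain ⟨δ, hδ0, L₀, hL₀3, hcore⟩ := analytic_core hμpos h1 h2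
  set gfun : ℕ → ℝ := fun N => Real.exp 3 * (Real.log N + 2) * Real.exp (-δ * Real.log N)
    with hgfun
  have hgt : Tendsto gfun atTop (nhds 0) := tendsto_aux δ hδ0
  -- eventual conditions
  have hev : ∀ᶠ N : ℕ in atTop, 5 ≤ N ∧ L₀ ≤ Real.log N := by
    have ha := Filter.eventually_ge_atTop 5 (α := ℕ)
    have hb := (Real.tendsto_log_atTop.comp
      (tendsto_natCast_atTop_atTop (R := ℝ))).eventually_ge_atTop L₀
    exact ha.and hb
  -- main bound: for good N, solveProb is within [0, gfun N]
  have hmain : ∀ N : ℕ, 5 ≤ N → L₀ ≤ Real.log N →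
      0 ≤ solveProb (G N) 1 1 ⊤ (μ / (D N * Real.log N)) ∧
      solveProb (G N) 1 1 ⊤ (μ / (D N * Real.log N)) ≤ gfun N := by
    intro N hN5 hLL₀
    set L : ℝ := Real.log N with hLdef
    have hL3 : (3 : ℝ) ≤ L := le_trans hL₀3 hLL₀
    have hL0 : (0 : ℝ) < L := by linarith
    have hN3 : 3 ≤ N := by omega
    have hcard : Fintype.card (Fin N) = N := Fintype.card_fin N
    have hD2 : 2 ≤ D N := by
      apply two_le_maxdeg (hconn N (by omega)) (by rw [hcard]; omega) (hdeg N)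
    have hD0 : (0 : ℝ) < (D N : ℝ) := by
      have : (2 : ℝ) ≤ (D N : ℝ) := by exact_mod_cast hD2
      linarith
    set p : ℝ := μ / (D N * L) with hpdef
    have hp0 : 0 ≤ p := by
      rw [hpdef]
      positivity
    have hp1 : p ≤ 1 := by
      rw [hpdef, div_le_one (by positivity)]
      have hD2' : (2 : ℝ) ≤ (D N : ℝ) := by exact_mod_cast hD2
      nlinarith
    set m : ℕ := ⌈L⌉₊ + 1 with hmdef
    have hm2 : 2 ≤ m := by
      have : 1 ≤ ⌈L⌉₊ := by
        rw [Nat.one_le_ceil_iff]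
        linarith
      omega
    have hmN : m ≤ Fintype.card (Fin N) := by
      rw [hcard]
      have hlog : L ≤ (N : ℝ) - 2 := by
        rw [hLdef]
        apply log_le_sub_two
        have : (5 : ℝ) ≤ (N : ℝ) := by exact_mod_cast hN5
        linarith
      have hceil : ⌈L⌉₊ ≤ N - 1 := by
        apply Nat.ceil_le.2
        have : ((N - 1 : ℕ) : ℝ) = (N : ℝ) - 1 := by
          rw [Nat.cast_sub (by omega), Nat.cast_one]
        rw [this]
        linarith
      omega
    constructor
    · exact solveProb_nonneg hp0 hp1
    · have hsum := solveProb_le_sum (Gpuz := G N) (hdeg N) hD2 hp0 hp1 hm2 hmN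
      -- bound each term
      have hterm : ∀ s ∈ Finset.Ico m (2 * m),
          (Fintype.card (Fin N) : ℝ) * ((D N : ℝ) ^ (s - 1) * Real.exp (s + 2))
            * ((((s + 1).choose 2).choose (s - 1) : ℕ) : ℝ) * p ^ (s - 1)
          ≤ (N : ℝ) * Real.exp 3 * Real.exp (-(1 + δ) * L) := by
        intro s hsIco
        obtain ⟨hsm, hsm2⟩ := Finset.mem_Ico.1 hsIco
        have hs2 : 2 ≤ s := le_trans hm2 hsm
        have hs1 : 1 ≤ s - 1 := by omega
        have hk : ((s - 1 : ℕ) : ℝ) = (s : ℝ) - 1 := by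
          rw [Nat.cast_sub (by omega), Nat.cast_one]
        have hs1R : (0 : ℝ) < (s : ℝ) - 1 := by
          have : (2 : ℝ) ≤ (s : ℝ) := by exact_mod_cast hs2
          linarith
        -- cast of the inner binomial
        have hM : ((((s + 1).choose 2) : ℕ) : ℝ) = (s + 1 : ℝ) * s / 2 := by
          rw [Nat.cast_choose_two]
          push_cast
          ring
        have hC : ((((s + 1).choose 2).choose (s - 1) : ℕ) : ℝ) ≤
            (Real.exp 1 * (((s + 1).choose 2 : ℕ) : ℝ) / ((s - 1 : ℕ) : ℝ)) ^ (s - 1) :=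
          choose_le_real _ _ hs1
        have hexp_split : Real.exp ((s : ℝ) + 2) = Real.exp 3 * Real.exp 1 ^ (s - 1) := by
          have : (s : ℝ) + 2 = 3 + ((s - 1 : ℕ) : ℝ) := by rw [hk]; ring
          rw [this, Real.exp_add]
          congr 1
          rw [← Real.exp_nat_mul]
          norm_num
        -- define Y
        set Y : ℝ := Real.exp 2 * μ * s * (s + 1) / (2 * ((s : ℝ) - 1) * L) with hYdef
        have hYbase : Real.exp 1 * ((D N : ℝ) * (Real.exp 1 * (((s + 1).choose 2 : ℕ) : ℝ)
            / ((s - 1 : ℕ) : ℝ)) * p) = Y := by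
          rw [hM, hk, hpdef, hYdef]
          rw [show Real.exp 2 = Real.exp 1 * Real.exp 1 by rw [← Real.exp_add]; norm_num]
          field_simp
        have hYpow : Y ^ (s - 1) ≤ Real.exp (-(1 + δ) * L) :=
          hcore L hLL₀ s hsm hsm2
        have hDpow0 : (0 : ℝ) ≤ (D N : ℝ) ^ (s - 1) := by positivity
        have hppow0 : (0 : ℝ) ≤ p ^ (s - 1) := by positivity
        have hCb0 : (0 : ℝ) ≤ (Real.exp 1 * (((s + 1).choose 2 : ℕ) : ℝ)
            / ((s - 1 : ℕ) : ℝ)) := by positivity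
        calc (Fintype.card (Fin N) : ℝ) * ((D N : ℝ) ^ (s - 1) * Real.exp (s + 2))
              * ((((s + 1).choose 2).choose (s - 1) : ℕ) : ℝ) * p ^ (s - 1)
            ≤ (Fintype.card (Fin N) : ℝ) * ((D N : ℝ) ^ (s - 1) * Real.exp (s + 2))
              * (Real.exp 1 * (((s + 1).choose 2 : ℕ) : ℝ) / ((s - 1 : ℕ) : ℝ)) ^ (s - 1)
              * p ^ (s - 1) := by
              have hpos : (0:ℝ) ≤ (Fintype.card (Fin N) : ℝ)
                  * ((D N : ℝ) ^ (s - 1) * Real.exp (s + 2)) := by positivity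
              apply mul_le_mul_of_nonneg_right _ hppow0
              exact mul_le_mul_of_nonneg_left hC hpos
          _ = (N : ℝ) * Real.exp 3 * (Real.exp 1 * ((D N : ℝ) * (Real.exp 1
              * (((s + 1).choose 2 : ℕ) : ℝ) / ((s - 1 : ℕ) : ℝ)) * p)) ^ (s - 1) := by
              rw [hcard, hexp_split]
              rw [mul_pow, mul_pow, mul_pow]
              ring
          _ = (N : ℝ) * Real.exp 3 * Y ^ (s - 1) := by rw [hYbase]
          _ ≤ (N : ℝ) * Real.exp 3 * Real.exp (-(1 + δ) * L) := by
              apply mul_le_mul_of_nonneg_left hYpow (by positivity)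
      have hsum2 : ∑ s ∈ Finset.Ico m (2 * m),
          (Fintype.card (Fin N) : ℝ) * ((D N : ℝ) ^ (s - 1) * Real.exp (s + 2))
            * ((((s + 1).choose 2).choose (s - 1) : ℕ) : ℝ) * p ^ (s - 1)
          ≤ (m : ℝ) * ((N : ℝ) * Real.exp 3 * Real.exp (-(1 + δ) * L)) := by
        calc ∑ s ∈ Finset.Ico m (2 * m), (Fintype.card (Fin N) : ℝ)
              * ((D N : ℝ) ^ (s - 1) * Real.exp (s + 2))
              * ((((s + 1).choose 2).choose (s - 1) : ℕ) : ℝ) * p ^ (s - 1)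
            ≤ ∑ _s ∈ Finset.Ico m (2 * m),
              (N : ℝ) * Real.exp 3 * Real.exp (-(1 + δ) * L) := Finset.sum_le_sum hterm
          _ = ((Finset.Ico m (2 * m)).card : ℝ)
              * ((N : ℝ) * Real.exp 3 * Real.exp (-(1 + δ) * L)) := by
              rw [Finset.sum_const, nsmul_eq_mul]
          _ = (m : ℝ) * ((N : ℝ) * Real.exp 3 * Real.exp (-(1 + δ) * L)) := by
              rw [Nat.card_Ico]
              congr 2
              omega
      have hNexp : (N : ℝ) = Real.exp L := by
        rw [hLdef, Real.exp_log (by positivity : (0:ℝ) < (N:ℝ))]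
      have hmL : (m : ℝ) ≤ L + 2 := by
        have hceil2 : (⌈L⌉₊ : ℝ) < L + 1 := Nat.ceil_lt_add_one (by linarith)
        rw [hmdef]
        push_cast
        linarith
      have hfinal : (m : ℝ) * ((N : ℝ) * Real.exp 3 * Real.exp (-(1 + δ) * L)) ≤ gfun N := by
        rw [hgfun]
        simp only [← hLdef]
        have hNe : (N : ℝ) * Real.exp (-(1 + δ) * L) = Real.exp (-δ * L) := by
          rw [hNexp, ← Real.exp_add]
          congr 1
          ring
        have hrw : (m : ℝ) * ((N : ℝ) * Real.exp 3 * Real.exp (-(1 + δ) * L))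
            = (m : ℝ) * Real.exp 3 * ((N : ℝ) * Real.exp (-(1 + δ) * L)) := by ring
        rw [hrw, hNe]
        have : (m : ℝ) * Real.exp 3 ≤ (L + 2) * Real.exp 3 :=
          mul_le_mul_of_nonneg_right hmL (by positivity)
        have hERpos : (0:ℝ) < Real.exp (-δ * L) := Real.exp_pos _
        calc (m : ℝ) * Real.exp 3 * Real.exp (-δ * L)
            ≤ (L + 2) * Real.exp 3 * Real.exp (-δ * L) := by
              apply mul_le_mul_of_nonneg_right this (le_of_lt hERpos)
          _ = Real.exp 3 * (L + 2) * Real.exp (-δ * L) := by ring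
      calc solveProb (G N) 1 1 ⊤ (μ / (D N * L)) ≤ _ := hsum
        _ ≤ (m : ℝ) * ((N : ℝ) * Real.exp 3 * Real.exp (-(1 + δ) * L)) := hsum2
        _ ≤ gfun N := hfinal
  apply squeeze_zero' (g := gfun)
  · exact hev.mono (fun N hN => (hmain N hN.1 hN.2).1)
  · exact hev.mono (fun N hN => (hmain N hN.1 hN.2).2)
  · exact hgt

end Final
/-- Theorem A / Theorem 3.1: for AE jigsaw percolation on a sequence of
connected puzzle graphs with `N` vertices and maximum degree at most `D(N)`, with
Erdős–Rényi people graph of edge probability `p = μ/(D log N)`, if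
`μ < min {2e^{-(3+η)}, e^{-(5+η)/2}}` where `η = limsup (log D / log N)`, then
`P_p(Solve) → 0` as `N → ∞`. -/
theorem stmt0 (G : (N : ℕ) → SimpleGraph (Fin N)) (D : ℕ → ℕ)
    (hD : ∀ N, 1 ≤ D N)
    (hconn : ∀ N, 1 ≤ N → (G N).Connected)
    (hdeg : ∀ N (v : Fin N), ((G N).neighborSet v).ncard ≤ D N)
    (μ η : ℝ) (hμpos : 0 < μ)
    (hη : Filter.limsup (fun N : ℕ => Real.log (D N) / Real.log N) atTop = η)
    (hμ : μ < min (2 * Real.exp (-(3 + η))) (Real.exp (-(5 + η) / 2))) :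
    Tendsto (fun N : ℕ => solveProb (G N) 1 1 ⊤ (μ / (D N * Real.log N)))
      atTop (nhds 0) := by
  exact stmt0' G D hD hconn hdeg μ η hμpos hη hμ

end JigsawPerc
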